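/- arXiv:2411.01346 — 5 statements merged into one kernel-verified Lean document; each statement's English description precedes it below -/
import Mathlib

section
/- A mapping F: U → ℝᵐ, where U ⊆ ℝⁿ is open, is Fréchet differentiable at x̄ ∈ U if and only if F is calm at x̄ and T_{gph F}(x̄, F(x̄)) is a linear subspace of ℝⁿ × ℝᵐ. Moreover, in this case dim T_{gph F}(x̄, F(x̄)) = n. -/
open Filter Topology Metric Set
open scoped RealInnerProductSpace NNReal ENNReal

noncomputable section

/-- Euclidean space `ℝⁿ`. -/
abbrev Euc (n : ℕ) : Type := EuclideanSpace ℝ (Fin n)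

section NormedDefs

variable {X Y : Type*} [NormedAddCommGroup X] [NormedSpace ℝ X]
  [NormedAddCommGroup Y] [NormedSpace ℝ Y]

/-- The (Bouligand) tangent cone to `Ω` at `z`. -/
def tanCone (Ω : Set X) (z : X) : Set X :=
  {w | ∃ (t : ℕ → ℝ) (wk : ℕ → X), (∀ k, 0 < t k) ∧ Tendsto t atTop (𝓝 0) ∧
      Tendsto wk atTop (𝓝 w) ∧ ∀ k, z + t k • wk k ∈ Ω}

/-- The regular (Clarke) tangent cone to `Ω` at `z`. -/
def clarkeCone (Ω : Set X) (z : X) : Set X :=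
  {w | ∀ (zk : ℕ → X) (t : ℕ → ℝ), (∀ k, zk k ∈ Ω) → Tendsto zk atTop (𝓝 z) →
      (∀ k, 0 < t k) → Tendsto t atTop (𝓝 0) →
      ∃ wk : ℕ → X, Tendsto wk atTop (𝓝 w) ∧ ∀ k, zk k + t k • wk k ∈ Ω}

/-- The paratingent cone to `Ω` at `z`. -/
def paraCone (Ω : Set X) (z : X) : Set X :=
  {w | ∃ (zk : ℕ → X) (t : ℕ → ℝ) (wk : ℕ → X), (∀ k, zk k ∈ Ω) ∧
      Tendsto zk atTop (𝓝 z) ∧ (∀ k, 0 < t k) ∧ Tendsto t atTop (𝓝 0) ∧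
      Tendsto wk atTop (𝓝 w) ∧ ∀ k, zk k + t k • wk k ∈ Ω}

/-- `Ω` is strictly smooth at `z` if the Clarke tangent cone and the paratingent
cone coincide there. -/
def StrictlySmoothAt (Ω : Set X) (z : X) : Prop := clarkeCone Ω z = paraCone Ω z

/-- `Ω` is geometrically derivable at `z`. -/
def GeomDerivableAt (Ω : Set X) (z : X) : Prop :=
  ∀ w ∈ tanCone Ω z, ∀ t : ℕ → ℝ, (∀ k, 0 < t k) → Tendsto t atTop (𝓝 0) →
    ∃ wk : ℕ → X, Tendsto wk atTop (𝓝 w) ∧ ∀ k, z + t k • wk k ∈ Ω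

/-- `Ω` is locally closed at `z`. -/
def LocallyClosedAt (Ω : Set X) (z : X) : Prop :=
  ∃ V : Set X, V ∈ 𝓝 z ∧ IsClosed V ∧ IsClosed (Ω ∩ V)

/-- The set `s` is a linear subspace. -/
def IsLinearSubspace (s : Set X) : Prop := ∃ S : Submodule ℝ X, (S : Set X) = s

/-- The set `s` is a linear subspace of dimension `d`. -/
def HasDim (s : Set X) (d : ℕ) : Prop :=
  ∃ S : Submodule ℝ X, (S : Set X) = s ∧ Module.finrank ℝ S = d

/-- The graph of a set-valued mapping. -/
def gphOf (Fm : X → Set Y) : Set (X × Y) := {p | p.2 ∈ Fm p.1}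

/-- The graph of a single-valued mapping defined on `U`. -/
def gphOn (f : X → Y) (U : Set X) : Set (X × Y) := {p | p.1 ∈ U ∧ p.2 = f p.1}

/-- `f` (defined on `U`) is strictly continuous (locally Lipschitz) at `xb`. -/
def StrictlyContinuousAt' (f : X → Y) (U : Set X) (xb : X) : Prop :=
  ∃ U' ∈ 𝓝 xb, U' ⊆ U ∧ ∃ κ : ℝ, 0 ≤ κ ∧
    ∀ x ∈ U', ∀ x' ∈ U', ‖f x - f x'‖ ≤ κ * ‖x - x'‖

/-- `f` (defined on `U`) is calm at `xb`. -/
def CalmAt' (f : X → Y) (U : Set X) (xb : X) : Prop :=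
  ∃ U' ∈ 𝓝 xb, U' ⊆ U ∧ ∃ κ : ℝ, 0 ≤ κ ∧ ∀ x ∈ U', ‖f x - f xb‖ ≤ κ * ‖x - xb‖

/-- `f` (defined on `U`) is strictly differentiable at `xb`. -/
def StrictDiffOnAt (f : X → Y) (U : Set X) (xb : X) : Prop :=
  ∃ A : X →L[ℝ] Y, ∀ ε : ℝ, 0 < ε → ∃ δ > 0, ∀ x ∈ U, ∀ x' ∈ U,
    ‖x - xb‖ < δ → ‖x' - xb‖ < δ → ‖f x' - f x - A (x' - x)‖ ≤ ε * ‖x' - x‖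

/-- `f` (defined on `U`) is Fréchet differentiable at `xb`. -/
def FrechetDiffOnAt (f : X → Y) (U : Set X) (xb : X) : Prop :=
  ∃ A : X →L[ℝ] Y, ∀ ε : ℝ, 0 < ε → ∃ δ > 0, ∀ x ∈ U,
    ‖x - xb‖ < δ → ‖f x - f xb - A (x - xb)‖ ≤ ε * ‖x - xb‖

/-- The B-Jacobian (Bouligand limiting Jacobian) of `f` at `xb`. -/
def BJacobian (f : X → Y) (U : Set X) (xb : X) : Set (X →L[ℝ] Y) :=
  {A | ∃ (xk : ℕ → X) (Ak : ℕ → X →L[ℝ] Y),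
      (∀ k, xk k ∈ U ∧ HasFDerivAt f (Ak k) (xk k)) ∧
      Tendsto xk atTop (𝓝 xb) ∧ Tendsto Ak atTop (𝓝 A)}

/-- `Ω ⊆ X` is a Lipschitz manifold of dimension `d` (and codimension `c`) around `z`:
up to a `C¹` change of coordinates `Φ`, `Ω` locally coincides with the graph of a
Lipschitz mapping `f : U → ℝᶜ`, `U ⊆ ℝᵈ` open. -/
def IsLipschitzManifoldAt (Ω : Set X) (d c : ℕ) (z : X) : Prop :=
  ∃ (W : Set X) (Φ : X → Euc d × Euc c) (Ψ : Euc d × Euc c → X)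
    (U : Set (Euc d)) (f : Euc d → Euc c) (K : ℝ≥0),
    IsOpen W ∧ z ∈ W ∧ IsOpen (Φ '' W) ∧
    ContDiffOn ℝ 1 Φ W ∧ ContDiffOn ℝ 1 Ψ (Φ '' W) ∧
    (∀ x ∈ W, Ψ (Φ x) = x) ∧ (∀ y ∈ Φ '' W, Φ (Ψ y) = y) ∧
    IsOpen U ∧ LipschitzOnWith K f U ∧
    Φ '' (Ω ∩ W) = {p | p.1 ∈ U ∧ p.2 = f p.1}

/-- As `IsLipschitzManifoldAt`, with the Lipschitz mapping `f` moreover strictly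
differentiable at the transformed reference point. -/
def IsGraphStrictDiffAt (Ω : Set X) (d c : ℕ) (z : X) : Prop :=
  ∃ (W : Set X) (Φ : X → Euc d × Euc c) (Ψ : Euc d × Euc c → X)
    (U : Set (Euc d)) (f : Euc d → Euc c) (K : ℝ≥0),
    IsOpen W ∧ z ∈ W ∧ IsOpen (Φ '' W) ∧
    ContDiffOn ℝ 1 Φ W ∧ ContDiffOn ℝ 1 Ψ (Φ '' W) ∧
    (∀ x ∈ W, Ψ (Φ x) = x) ∧ (∀ y ∈ Φ '' W, Φ (Ψ y) = y) ∧
    IsOpen U ∧ LipschitzOnWith K f U ∧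
    Φ '' (Ω ∩ W) = {p | p.1 ∈ U ∧ p.2 = f p.1} ∧
    StrictDiffOnAt f U (Φ z).1

/-- Strong metric subregularity of a set-valued mapping at `(xb, yb)`. -/
def StronglySubregAt (Fm : X → Set Y) (xb : X) (yb : Y) : Prop :=
  ∃ κ : ℝ≥0, ∃ U ∈ 𝓝 xb, ∀ x ∈ U,
    (‖x - xb‖₊ : ℝ≥0∞) ≤ (κ : ℝ≥0∞) * EMetric.infEdist yb (Fm x)

/-- Metric regularity of a set-valued mapping around `(xb, yb)`. -/
def MetricallyRegularAround (Fm : X → Set Y) (xb : X) (yb : Y) : Prop :=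
  ∃ κ : ℝ≥0, ∃ U ∈ 𝓝 xb, ∃ V ∈ 𝓝 yb, ∀ x ∈ U, ∀ y ∈ V,
    EMetric.infEdist x {x' | y ∈ Fm x'} ≤ (κ : ℝ≥0∞) * EMetric.infEdist y (Fm x)

/-- Strong metric regularity of a set-valued mapping around `(xb, yb)`. -/
def StronglyRegularAround (Fm : X → Set Y) (xb : X) (yb : Y) : Prop :=
  MetricallyRegularAround Fm xb yb ∧
  ∃ (U' : Set X) (V' : Set Y) (h : Y → X), IsOpen U' ∧ IsOpen V' ∧
    xb ∈ U' ∧ yb ∈ V' ∧ h yb = xb ∧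
    gphOf Fm ∩ (U' ×ˢ V') = {p | p.2 ∈ V' ∧ p.1 = h p.2}

end NormedDefs

section InnerDefs

variable {E F : Type*} [NormedAddCommGroup E] [InnerProductSpace ℝ E]
  [NormedAddCommGroup F] [InnerProductSpace ℝ F]

/-- The regular (Fréchet) normal cone: the polar of the tangent cone. -/
def regNormal (Ω : Set E) (z : E) : Set E := {v | ∀ w ∈ tanCone Ω z, ⟪v, w⟫ ≤ 0}

/-- The limiting (Mordukhovich) normal cone. -/
def limNormal (Ω : Set E) (z : E) : Set E :=
  {v | ∃ zk vk : ℕ → E, (∀ k, zk k ∈ Ω) ∧ Tendsto zk atTop (𝓝 z) ∧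
      (∀ k, vk k ∈ regNormal Ω (zk k)) ∧ Tendsto vk atTop (𝓝 v)}

/-- `Ω` is normally regular at `z`. -/
def NormallyRegularAt (Ω : Set E) (z : E) : Prop := regNormal Ω z = limNormal Ω z

/-- The orthogonal complement (as a set) of a set. -/
def orthSet (s : Set E) : Set E := {v | ∀ w ∈ s, ⟪v, w⟫ = 0}

/-- `Ω` is semismooth* at `zb`. -/
def SemismoothStarAt (Ω : Set E) (zb : E) : Prop :=
  ∀ ε : ℝ, 0 < ε → ∃ δ > 0, ∀ z ∈ Ω, ‖z - zb‖ < δ → ∀ v ∈ limNormal Ω z,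
    |⟪v, z - zb⟫| ≤ ε * ‖z - zb‖ * ‖v‖

/-- The canonical inner product of the product of two inner product spaces. -/
def inner2 (p q : E × F) : ℝ := ⟪p.1, q.1⟫ + ⟪p.2, q.2⟫

/-- The regular normal cone for subsets of a product space. -/
def regNormal2 (Ω : Set (E × F)) (z : E × F) : Set (E × F) :=
  {v | ∀ w ∈ tanCone Ω z, inner2 v w ≤ 0}

/-- The limiting normal cone for subsets of a product space. -/
def limNormal2 (Ω : Set (E × F)) (z : E × F) : Set (E × F) :=
  {v | ∃ zk vk : ℕ → E × F, (∀ k, zk k ∈ Ω) ∧ Tendsto zk atTop (𝓝 z) ∧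
      (∀ k, vk k ∈ regNormal2 Ω (zk k)) ∧ Tendsto vk atTop (𝓝 v)}

/-- Normal regularity for subsets of a product space. -/
def NormallyRegular2At (Ω : Set (E × F)) (z : E × F) : Prop :=
  regNormal2 Ω z = limNormal2 Ω z

/-- Orthogonal complement (as a set) in a product space. -/
def orthSet2 (s : Set (E × F)) : Set (E × F) := {v | ∀ w ∈ s, inner2 v w = 0}

/-- The graph of the limiting coderivative of a mapping with graph `Γ` at `z`:
`{(y*, x*) : (x*, -y*) ∈ N_Γ(z)}`. -/
def coderivGraph (Γ : Set (E × F)) (z : E × F) : Set (F × E) :=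
  {q | (q.2, -q.1) ∈ limNormal2 Γ z}

/-- The semismooth* property for subsets of a product space (i.e. for mappings). -/
def SemismoothStar2At (Ω : Set (E × F)) (zb : E × F) : Prop :=
  ∀ ε : ℝ, 0 < ε → ∃ δ > 0, ∀ z ∈ Ω, ‖z - zb‖ < δ → ∀ v ∈ limNormal2 Ω z,
    |inner2 v (z - zb)| ≤ ε * ‖z - zb‖ * ‖v‖

/-- The regular subdifferential of an extended-real-valued function. -/
def regSubdiff (φ : E → EReal) (xb : E) : Set E :=
  {v | φ xb ≠ ⊤ ∧ φ xb ≠ ⊥ ∧ ∀ ε : ℝ, 0 < ε → ∃ δ > 0, ∀ x, ‖x - xb‖ < δ →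
      φ xb + ((⟪v, x - xb⟫ - ε * ‖x - xb‖ : ℝ) : EReal) ≤ φ x}

/-- The limiting (Mordukhovich) subdifferential. -/
def limSubdiff (φ : E → EReal) (xb : E) : Set E :=
  {v | ∃ xk vk : ℕ → E, Tendsto xk atTop (𝓝 xb) ∧
      Tendsto (fun k => φ (xk k)) atTop (𝓝 (φ xb)) ∧
      (∀ k, vk k ∈ regSubdiff φ (xk k)) ∧ Tendsto vk atTop (𝓝 v)}

/-- `φ` is prox-regular at `xb` for `vb` with parameters `r ≥ 0` and `ε > 0`. -/
def ProxRegular (φ : E → EReal) (xb vb : E) (r ε : ℝ) : Prop :=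
  ∀ x' x v, ‖x' - xb‖ < ε → v ∈ limSubdiff φ x → ‖x - xb‖ < ε → ‖v - vb‖ < ε →
    φ x < φ xb + (ε : EReal) →
    φ x + ((⟪v, x' - x⟫ - r / 2 * ‖x' - x‖ ^ 2 : ℝ) : EReal) ≤ φ x'

/-- The graph of the `φ`-attentive `ε`-localization of `∂φ` around `(xb, vb)`. -/
def attLocGraph (φ : E → EReal) (xb vb : E) (ε : ℝ) : Set (E × E) :=
  {p | p.2 ∈ limSubdiff φ p.1 ∧ ‖p.1 - xb‖ < ε ∧ ‖p.2 - vb‖ < ε ∧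
      φ p.1 < φ xb + (ε : EReal)}

end InnerDefs

/-- The map `ℝⁿ → ℝᵈ × ℝᶜ` obtained from a permutation (re-indexing) of the
coordinates followed by splitting them into the first `d` and the last `c` ones. -/
def permSplit {n d c : ℕ} (e : Fin n ≃ (Fin d ⊕ Fin c)) (z : Euc n) : Euc d × Euc c :=
  (show Euc d from WithLp.toLp 2 (fun i => z (e.symm (Sum.inl i))),
   show Euc c from WithLp.toLp 2 (fun j => z (e.symm (Sum.inr j))))

section StmtFourAux

variable {n m : ℕ}

private lemma gph_mem_iff' {U : Set (Euc n)} {f : Euc n → Euc m} {xb : Euc n}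
    (t : ℝ) (p : Euc n × Euc m) :
    (xb, f xb) + t • p ∈ gphOn f U ↔
      xb + t • p.1 ∈ U ∧ f xb + t • p.2 = f (xb + t • p.1) := Iff.rfl

private lemma tanCone_graph_eq (U : Set (Euc n)) (hU : IsOpen U) (f : Euc n → Euc m)
    (xb : Euc n) (hx : xb ∈ U) (A : Euc n →L[ℝ] Euc m)
    (hA : ∀ ε : ℝ, 0 < ε → ∃ δ > 0, ∀ x ∈ U, ‖x - xb‖ < δ →
      ‖f x - f xb - A (x - xb)‖ ≤ ε * ‖x - xb‖) :
    tanCone (gphOn f U) (xb, f xb) = {p : Euc n × Euc m | p.2 = A p.1} := by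
  ext ⟨w, v⟩
  simp only [Set.mem_setOf_eq]
  constructor
  · rintro ⟨t, wk, htpos, ht0, hwk, hmem⟩
    have hmem' : ∀ k, (xb + t k • (wk k).1 ∈ U) ∧
        f xb + t k • (wk k).2 = f (xb + t k • (wk k).1) := fun k =>
      (gph_mem_iff' (t k) (wk k)).mp (hmem k)
    have hu_t : Tendsto (fun k => (wk k).1) atTop (𝓝 w) :=
      (continuous_fst.tendsto _).comp hwk
    have hv_t : Tendsto (fun k => (wk k).2) atTop (𝓝 v) :=
      (continuous_snd.tendsto _).comp hwk
    have hx_t : Tendsto (fun k => xb + t k • (wk k).1) atTop (𝓝 xb) := by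
      have h1 : Tendsto (fun k => t k • (wk k).1) atTop (𝓝 ((0:ℝ) • w)) :=
        ht0.smul hu_t
      simpa using tendsto_const_nhds.add h1
    have key : ∀ ε : ℝ, 0 < ε → ‖v - A w‖ ≤ ε * (‖w‖ + 1) := by
      intro ε hε
      obtain ⟨δ, hδ, hb⟩ := hA ε hε
      have hev1 : ∀ᶠ k in atTop, ‖(xb + t k • (wk k).1) - xb‖ < δ := by
        have := hx_t (Metric.ball_mem_nhds xb hδ)
        simpa [Metric.mem_ball, dist_eq_norm] using this
      have hev2 : ∀ᶠ k in atTop, ‖(wk k).1‖ < ‖w‖ + 1 := by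
        have hn : Tendsto (fun k => ‖(wk k).1‖) atTop (𝓝 ‖w‖) := hu_t.norm
        exact hn (Iio_mem_nhds (by linarith))
      have hev : ∀ᶠ k in atTop, ‖(wk k).2 - A ((wk k).1)‖ ≤ ε * (‖w‖ + 1) := by
        filter_upwards [hev1, hev2] with k h1 h2
        have hxk := hb (xb + t k • (wk k).1) (hmem' k).1 h1
        have e1 : (xb + t k • (wk k).1) - xb = t k • (wk k).1 := by abel
        have e2 : f (xb + t k • (wk k).1) - f xb = t k • (wk k).2 := by
          rw [← (hmem' k).2]; abel
        rw [e1, e2, map_smul, ← smul_sub, norm_smul, norm_smul,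
          Real.norm_eq_abs, abs_of_pos (htpos k)] at hxk
        have h3 : ‖(wk k).2 - A ((wk k).1)‖ ≤ ε * ‖(wk k).1‖ := by
          have := (mul_le_mul_iff_right₀ (htpos k)).mp (by linarith [hxk] :
            t k * ‖(wk k).2 - A ((wk k).1)‖ ≤ t k * (ε * ‖(wk k).1‖))
          exact this
        exact h3.trans (by nlinarith [norm_nonneg ((wk k).1)])
      have hlim : Tendsto (fun k => ‖(wk k).2 - A ((wk k).1)‖) atTop
          (𝓝 ‖v - A w‖) :=
        (hv_t.sub ((A.continuous.tendsto w).comp hu_t)).norm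
      exact le_of_tendsto hlim hev
    have hz : ‖v - A w‖ ≤ 0 := by
      by_contra hpos
      push_neg at hpos
      have h1 := key (‖v - A w‖ / (2 * (‖w‖ + 1))) (by positivity)
      have h2 : (‖v - A w‖ / (2 * (‖w‖ + 1))) * (‖w‖ + 1) = ‖v - A w‖ / 2 := by
        field_simp
      rw [h2] at h1
      linarith
    have := norm_le_zero_iff.mp hz
    exact (sub_eq_zero.mp this)
  · intro hv
    subst hv
    obtain ⟨r, hr, hrU⟩ := Metric.isOpen_iff.mp hU xb hx
    set c := r / (2 * (‖w‖ + 1)) with hc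
    have hcpos : 0 < c := by positivity
    set t : ℕ → ℝ := fun k => c / (k + 1) with htdef
    have htpos : ∀ k, 0 < t k := fun k => by positivity
    have ht0 : Tendsto t atTop (𝓝 0) := by
      have h := tendsto_one_div_add_atTop_nhds_zero_nat (𝕜 := ℝ)
      have h2 := h.const_mul c
      simpa [htdef, mul_one_div, div_eq_mul_inv] using h2
    have htle : ∀ k, t k ≤ c := by
      intro k
      rw [htdef]
      apply div_le_self hcpos.le
      have : (0:ℝ) ≤ (k:ℝ) := Nat.cast_nonneg k
      linarith
    have hxU : ∀ k, xb + t k • w ∈ U := by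
      intro k
      apply hrU
      have hnorm : ‖t k • w‖ < r := by
        rw [norm_smul, Real.norm_eq_abs, abs_of_pos (htpos k)]
        calc t k * ‖w‖ ≤ c * (‖w‖ + 1) := by
              apply mul_le_mul (htle k) (by linarith) (norm_nonneg w) hcpos.le
          _ = r / 2 := by rw [hc]; field_simp
          _ < r := by linarith
      simpa [Metric.mem_ball, dist_eq_norm, add_sub_cancel_left] using hnorm
    set vk : ℕ → Euc m := fun k => (t k)⁻¹ • (f (xb + t k • w) - f xb) with hvkdef
    have hmemg : ∀ k, (xb, f xb) + t k • (w, vk k) ∈ gphOn f U := by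
      intro k
      rw [gph_mem_iff']
      refine ⟨hxU k, ?_⟩
      have : t k • vk k = f (xb + t k • w) - f xb := by
        rw [hvkdef]; exact smul_inv_smul₀ (htpos k).ne' _
      rw [this]; abel
    have hvk_t : Tendsto vk atTop (𝓝 (A w)) := by
      rw [NormedAddCommGroup.tendsto_atTop]
      intro ε hε
      obtain ⟨δ, hδ, hb⟩ := hA (ε / (2 * (‖w‖ + 1))) (by positivity)
      obtain ⟨N, hN⟩ := Metric.tendsto_atTop.mp ht0 (δ / (‖w‖ + 1)) (by positivity)
      refine ⟨N, fun k hk => ?_⟩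
      have htk : t k < δ / (‖w‖ + 1) := by
        have := hN k hk
        rwa [Real.dist_eq, sub_zero, abs_of_pos (htpos k)] at this
      have hxd : ‖(xb + t k • w) - xb‖ < δ := by
        have e1 : (xb + t k • w) - xb = t k • w := by abel
        rw [e1, norm_smul, Real.norm_eq_abs, abs_of_pos (htpos k)]
        calc t k * ‖w‖ ≤ t k * (‖w‖ + 1) := by
              apply mul_le_mul_of_nonneg_left (by linarith) (htpos k).le
          _ < (δ / (‖w‖ + 1)) * (‖w‖ + 1) := by
              apply mul_lt_mul_of_pos_right htk (by positivity)
          _ = δ := by field_simp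
      have hxk := hb (xb + t k • w) (hxU k) hxd
      have e1 : (xb + t k • w) - xb = t k • w := by abel
      have e2 : vk k - A w = (t k)⁻¹ • (f (xb + t k • w) - f xb - A (t k • w)) := by
        rw [hvkdef, map_smul, smul_sub]
        simp only [inv_smul_smul₀ (htpos k).ne']
      rw [e1] at hxk
      rw [e2, norm_smul, Real.norm_eq_abs, abs_of_pos (inv_pos.mpr (htpos k))]
      calc (t k)⁻¹ * ‖f (xb + t k • w) - f xb - A (t k • w)‖
          ≤ (t k)⁻¹ * (ε / (2 * (‖w‖ + 1)) * ‖t k • w‖) := by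
            apply mul_le_mul_of_nonneg_left hxk (inv_pos.mpr (htpos k)).le
        _ = ε / (2 * (‖w‖ + 1)) * ‖w‖ := by
            rw [norm_smul, Real.norm_eq_abs, abs_of_pos (htpos k)]
            rw [show (t k)⁻¹ * (ε / (2 * (‖w‖ + 1)) * (t k * ‖w‖)) = ε / (2 * (‖w‖ + 1)) * ‖w‖ * ((t k)⁻¹ * t k) by ring, inv_mul_cancel₀ (htpos k).ne', mul_one]
        _ ≤ ε / (2 * (‖w‖ + 1)) * (‖w‖ + 1) := by
            apply mul_le_mul_of_nonneg_left (by linarith) (by positivity)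
        _ = ε / 2 := by field_simp
        _ < ε := by linarith
    refine ⟨t, fun k => (w, vk k), htpos, ht0, ?_, hmemg⟩
    exact tendsto_const_nhds.prodMk_nhds hvk_t

private lemma graph_submodule (A : Euc n →L[ℝ] Euc m) :
    ∃ S : Submodule ℝ (Euc n × Euc m), (S : Set (Euc n × Euc m)) =
      {p : Euc n × Euc m | p.2 = A p.1} ∧ Module.finrank ℝ S = n := by
  set g : Euc n →ₗ[ℝ] Euc n × Euc m :=
    LinearMap.prod LinearMap.id (A : Euc n →ₗ[ℝ] Euc m) with hg
  have hinj : Function.Injective g := by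
    intro a b h
    have := congrArg Prod.fst h
    simpa [hg] using this
  refine ⟨LinearMap.range g, ?_, ?_⟩
  · ext ⟨w, v⟩
    simp only [SetLike.mem_coe, LinearMap.mem_range, Set.mem_setOf_eq, hg,
      LinearMap.prod_apply, LinearMap.id_apply, Pi.prod, Prod.ext_iff]
    constructor
    · rintro ⟨y, hy1, hy2⟩
      subst hy1; simpa using hy2.symm
    · intro hvw
      exact ⟨w, rfl, by simpa using hvw.symm⟩
  · rw [← (LinearEquiv.ofInjective g hinj).finrank_eq]
    simp [finrank_euclideanSpace_fin]

private lemma frechet_of_calm_sub (U : Set (Euc n)) (hU : IsOpen U) (f : Euc n → Euc m)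
    (xb : Euc n) (hx : xb ∈ U) (hcalm : CalmAt' f U xb)
    (S : Submodule ℝ (Euc n × Euc m))
    (hS : (S : Set (Euc n × Euc m)) = tanCone (gphOn f U) (xb, f xb)) :
    FrechetDiffOnAt f U xb := by
  obtain ⟨U', hU'n, hU'sub, κ, hκ, hc⟩ := hcalm
  obtain ⟨r, hr, hrU⟩ := Metric.mem_nhds_iff.mp hU'n
  -- Step A: tangent vectors satisfy ‖v‖ ≤ κ‖w‖
  have stepA : ∀ w v, (w, v) ∈ tanCone (gphOn f U) (xb, f xb) → ‖v‖ ≤ κ * ‖w‖ := by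
    rintro w v ⟨t, wk, htpos, ht0, hwk, hmem⟩
    have hmem' : ∀ k, (xb + t k • (wk k).1 ∈ U) ∧
        f xb + t k • (wk k).2 = f (xb + t k • (wk k).1) := fun k =>
      (gph_mem_iff' (t k) (wk k)).mp (hmem k)
    have hu_t : Tendsto (fun k => (wk k).1) atTop (𝓝 w) :=
      (continuous_fst.tendsto _).comp hwk
    have hv_t : Tendsto (fun k => (wk k).2) atTop (𝓝 v) :=
      (continuous_snd.tendsto _).comp hwk
    have hx_t : Tendsto (fun k => xb + t k • (wk k).1) atTop (𝓝 xb) := by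
      have h1 : Tendsto (fun k => t k • (wk k).1) atTop (𝓝 ((0:ℝ) • w)) :=
        ht0.smul hu_t
      simpa using tendsto_const_nhds.add h1
    have hev : ∀ᶠ k in atTop, ‖(wk k).2‖ ≤ κ * ‖(wk k).1‖ := by
      have hball : ∀ᶠ k in atTop, (xb + t k • (wk k).1) ∈ Metric.ball xb r :=
        hx_t (Metric.ball_mem_nhds xb hr)
      filter_upwards [hball] with k hk
      have hxU' : xb + t k • (wk k).1 ∈ U' := hrU hk
      have hcb := hc _ hxU'
      have e1 : (xb + t k • (wk k).1) - xb = t k • (wk k).1 := by abel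
      have e2 : f (xb + t k • (wk k).1) - f xb = t k • (wk k).2 := by
        rw [← (hmem' k).2]; abel
      rw [e1, e2, norm_smul, norm_smul, Real.norm_eq_abs,
        abs_of_pos (htpos k)] at hcb
      have := (mul_le_mul_iff_right₀ (htpos k)).mp (by linarith [hcb] :
        t k * ‖(wk k).2‖ ≤ t k * (κ * ‖(wk k).1‖))
      exact this
    exact le_of_tendsto_of_tendsto hv_t.norm (hu_t.norm.const_mul κ) hev
  -- Step B: every w is the first component of some tangent vector
  have stepB : ∀ w : Euc n, ∃ v, (w, v) ∈ tanCone (gphOn f U) (xb, f xb) := by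
    intro w
    set c := r / (2 * (‖w‖ + 1)) with hcdef
    have hcpos : 0 < c := by positivity
    set t : ℕ → ℝ := fun k => c / (k + 1) with htdef
    have htpos : ∀ k, 0 < t k := fun k => by positivity
    have ht0 : Tendsto t atTop (𝓝 0) := by
      have h := tendsto_one_div_add_atTop_nhds_zero_nat (𝕜 := ℝ)
      have h2 := h.const_mul c
      simpa [htdef, mul_one_div, div_eq_mul_inv] using h2
    have htle : ∀ k, t k ≤ c := by
      intro k
      rw [htdef]
      apply div_le_self hcpos.le
      have : (0:ℝ) ≤ (k:ℝ) := Nat.cast_nonneg k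
      linarith
    have hxB : ∀ k, xb + t k • w ∈ Metric.ball xb r := by
      intro k
      have hnorm : ‖t k • w‖ < r := by
        rw [norm_smul, Real.norm_eq_abs, abs_of_pos (htpos k)]
        calc t k * ‖w‖ ≤ c * (‖w‖ + 1) := by
              apply mul_le_mul (htle k) (by linarith) (norm_nonneg w) hcpos.le
          _ = r / 2 := by rw [hcdef]; field_simp
          _ < r := by linarith
      simpa [Metric.mem_ball, dist_eq_norm, add_sub_cancel_left] using hnorm
    set vk : ℕ → Euc m := fun k => (t k)⁻¹ • (f (xb + t k • w) - f xb) with hvkdef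
    have hvbd : ∀ k, vk k ∈ Metric.closedBall (0 : Euc m) (κ * ‖w‖) := by
      intro k
      rw [Metric.mem_closedBall, dist_zero_right, hvkdef]
      have hcb := hc _ (hrU (hxB k))
      have e1 : (xb + t k • w) - xb = t k • w := by abel
      rw [e1, norm_smul, Real.norm_eq_abs, abs_of_pos (htpos k)] at hcb
      rw [norm_smul, Real.norm_eq_abs, abs_of_pos (inv_pos.mpr (htpos k))]
      calc (t k)⁻¹ * ‖f (xb + t k • w) - f xb‖ ≤ (t k)⁻¹ * (κ * (t k * ‖w‖)) := by
            apply mul_le_mul_of_nonneg_left (by linarith) (inv_pos.mpr (htpos k)).le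
        _ = κ * ‖w‖ := by rw [show (t k)⁻¹ * (κ * (t k * ‖w‖)) = κ * ‖w‖ * ((t k)⁻¹ * t k) by ring, inv_mul_cancel₀ (htpos k).ne', mul_one]
    obtain ⟨q, -, φ, hφ, hqt⟩ :=
      tendsto_subseq_of_bounded Metric.isBounded_closedBall hvbd
    refine ⟨q, t ∘ φ, fun k => (w, vk (φ k)), fun k => htpos _,
      ht0.comp hφ.tendsto_atTop, tendsto_const_nhds.prodMk_nhds hqt, ?_⟩
    intro k
    rw [gph_mem_iff']
    refine ⟨hU'sub (hrU (hxB (φ k))), ?_⟩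
    show f xb + t (φ k) • vk (φ k) = f (xb + t (φ k) • w)
    have : t (φ k) • vk (φ k) = f (xb + t (φ k) • w) - f xb := by
      rw [hvkdef]; exact smul_inv_smul₀ (htpos _).ne' _
    rw [this]; abel
  -- construct the linear map
  set P : S →ₗ[ℝ] Euc n := (LinearMap.fst ℝ (Euc n) (Euc m)).comp S.subtype with hP
  have hker : ∀ z : Euc n × Euc m, z ∈ S → z.1 = 0 → z.2 = 0 := by
    intro z hz h1
    have hzc : (z.1, z.2) ∈ tanCone (gphOn f U) (xb, f xb) := by
      rw [← hS]; simpa using hz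
    have := stepA z.1 z.2 hzc
    rw [h1] at this
    simp only [norm_zero, mul_zero] at this
    exact norm_le_zero_iff.mp this
  have hinj : Function.Injective P := by
    intro a b hab
    have hmem : ((a : Euc n × Euc m) - b) ∈ S := S.sub_mem a.2 b.2
    have h1 : ((a : Euc n × Euc m) - b).1 = 0 := by
      have : (a : Euc n × Euc m).1 = (b : Euc n × Euc m).1 := hab
      simp [this]
    have h2 := hker _ hmem h1
    have : (a : Euc n × Euc m) = b := by
      have := sub_eq_zero.mp (Prod.ext_iff.mpr ⟨h1, h2⟩ :
        ((a : Euc n × Euc m) - b) = 0)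
      exact this
    exact Subtype.ext this
  have hsurj : Function.Surjective P := by
    intro w
    obtain ⟨v, hv⟩ := stepB w
    have hmem : ((w, v) : Euc n × Euc m) ∈ S := by
      rw [← SetLike.mem_coe, hS]; exact hv
    exact ⟨⟨(w, v), hmem⟩, rfl⟩
  set e := LinearEquiv.ofBijective P ⟨hinj, hsurj⟩ with he
  set A₀ : Euc n →ₗ[ℝ] Euc m :=
    (LinearMap.snd ℝ (Euc n) (Euc m)).comp (S.subtype.comp e.symm.toLinearMap) with hA₀
  have hsymm : ∀ w : Euc n, ((e.symm w : S) : Euc n × Euc m).1 = w := by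
    intro w
    have h1 := e.apply_symm_apply w
    exact h1
  have hgraph : ∀ w : Euc n, ((w, A₀ w) : Euc n × Euc m) ∈ S := by
    intro w
    have h2 : ((e.symm w : S) : Euc n × Euc m) ∈ S := (e.symm w : S).2
    have heq : ((e.symm w : S) : Euc n × Euc m) = (w, A₀ w) :=
      Prod.ext_iff.mpr ⟨hsymm w, rfl⟩
    rwa [heq] at h2
  have huniq : ∀ w v, ((w, v) : Euc n × Euc m) ∈
      tanCone (gphOn f U) (xb, f xb) → v = A₀ w := by
    intro w v hv
    have hvS : ((w, v) : Euc n × Euc m) ∈ S := by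
      rw [← SetLike.mem_coe, hS]; exact hv
    have hd : (((w, v) : Euc n × Euc m) - (w, A₀ w)) ∈ S :=
      S.sub_mem hvS (hgraph w)
    have h1 : (((w, v) : Euc n × Euc m) - (w, A₀ w)).1 = 0 := by simp
    have h2 := hker _ hd h1
    have : v - A₀ w = 0 := h2
    exact sub_eq_zero.mp this
  set A : Euc n →L[ℝ] Euc m := LinearMap.toContinuousLinearMap A₀ with hA
  have hAeq : ∀ y, A y = A₀ y := fun y => rfl
  refine ⟨A, ?_⟩
  intro ε hε
  by_contra hcon
  push_neg at hcon
  choose x hxmem hxlt hxgt using fun k : ℕ =>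
    hcon (min r (1 / (k + 1 : ℝ))) (lt_min hr (by positivity))
  set t : ℕ → ℝ := fun k => ‖x k - xb‖ with htdef
  have htpos : ∀ k, 0 < t k := by
    intro k
    rcases (norm_nonneg (x k - xb)).lt_or_eq with h | h
    · exact h
    · exfalso
      have hxeq : x k = xb := by
        have := (norm_eq_zero.mp h.symm)
        exact sub_eq_zero.mp this
      have := hxgt k
      rw [hxeq] at this
      simp at this
  have ht0 : Tendsto t atTop (𝓝 0) := by
    apply squeeze_zero (fun k => norm_nonneg _)
      (fun k => ((hxlt k).le.trans (min_le_right _ _)))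
    exact tendsto_one_div_add_atTop_nhds_zero_nat
  have hxU' : ∀ k, x k ∈ U' := fun k => hrU (by
    simp only [Metric.mem_ball, dist_eq_norm]
    exact (hxlt k).trans_le (min_le_left _ _))
  set u : ℕ → Euc n := fun k => (t k)⁻¹ • (x k - xb) with hudef
  set v : ℕ → Euc m := fun k => (t k)⁻¹ • (f (x k) - f xb) with hvdef
  have hxk : ∀ j, xb + t j • u j = x j := by
    intro j; rw [hudef]
    simp only [smul_inv_smul₀ (htpos j).ne']
    abel
  have hfk : ∀ j, f xb + t j • v j = f (x j) := by
    intro j; rw [hvdef]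
    simp only [smul_inv_smul₀ (htpos j).ne']
    abel
  have hnu : ∀ k, ‖u k‖ = 1 := by
    intro k
    rw [hudef]
    simp only [norm_smul, Real.norm_eq_abs, abs_of_pos (inv_pos.mpr (htpos k))]
    exact inv_mul_cancel₀ (htpos k).ne'
  have hnv : ∀ k, ‖v k‖ ≤ κ := by
    intro k
    rw [hvdef]
    simp only [norm_smul, Real.norm_eq_abs, abs_of_pos (inv_pos.mpr (htpos k))]
    have hcb := hc _ (hxU' k)
    calc (t k)⁻¹ * ‖f (x k) - f xb‖ ≤ (t k)⁻¹ * (κ * t k) := by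
          apply mul_le_mul_of_nonneg_left hcb (inv_pos.mpr (htpos k)).le
      _ = κ := by rw [mul_comm κ (t k), ← mul_assoc, inv_mul_cancel₀ (htpos k).ne', one_mul]
  have hpmem : ∀ k, ((u k, v k) : Euc n × Euc m) ∈
      Metric.closedBall (0 : Euc n × Euc m) (max 1 κ) := by
    intro k
    rw [Metric.mem_closedBall, dist_zero_right, Prod.norm_def]
    exact max_le_max (le_of_eq (hnu k)) (hnv k)
  obtain ⟨q, -, φ, hφ, hqt⟩ :=
    tendsto_subseq_of_bounded Metric.isBounded_closedBall hpmem
  have hcone : q ∈ tanCone (gphOn f U) (xb, f xb) := by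
    refine ⟨t ∘ φ, fun k => (u (φ k), v (φ k)), fun k => htpos _,
      ht0.comp hφ.tendsto_atTop, hqt, ?_⟩
    intro k
    rw [gph_mem_iff']
    constructor
    · show xb + t (φ k) • u (φ k) ∈ U
      rw [hxk]; exact hxmem _
    · show f xb + t (φ k) • v (φ k) = f (xb + t (φ k) • u (φ k))
      rw [hxk, hfk]
  have hqeq : q.2 = A₀ q.1 := by
    apply huniq
    simpa using hcone
  have hlow : ∀ j, ε ≤ ‖v j - A₀ (u j)‖ := by
    intro j
    have hgt := hxgt j
    have e2 : v j - A₀ (u j) = (t j)⁻¹ • (f (x j) - f xb - A (x j - xb)) := by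
      rw [hvdef, hudef, smul_sub]
      congr 1
      rw [← hAeq]
      rw [map_smul]
    rw [e2, norm_smul, Real.norm_eq_abs, abs_of_pos (inv_pos.mpr (htpos j))]
    calc ε = (t j)⁻¹ * (ε * t j) := by
          rw [mul_comm ε (t j), ← mul_assoc, inv_mul_cancel₀ (htpos j).ne', one_mul]
      _ ≤ (t j)⁻¹ * ‖f (x j) - f xb - A (x j - xb)‖ := by
          apply mul_le_mul_of_nonneg_left hgt.le (inv_pos.mpr (htpos j)).le
  have hlim : Tendsto (fun k => ‖v (φ k) - A₀ (u (φ k))‖) atTop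
      (𝓝 ‖q.2 - A₀ q.1‖) := by
    have hqu : Tendsto (fun k => u (φ k)) atTop (𝓝 q.1) :=
      (continuous_fst.tendsto _).comp hqt
    have hqv : Tendsto (fun k => v (φ k)) atTop (𝓝 q.2) :=
      (continuous_snd.tendsto _).comp hqt
    have hAcont : Continuous A₀ := A.continuous
    exact (hqv.sub ((hAcont.tendsto _).comp hqu)).norm
  have hfin : ε ≤ ‖q.2 - A₀ q.1‖ :=
    ge_of_tendsto' hlim (fun k => hlow (φ k))
  rw [hqeq] at hfin
  simp only [sub_self, norm_zero] at hfin
  linarith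

end StmtFourAux

/-- Corollary 2.8: Fréchet differentiability is equivalent to calmness
together with the subspace property of the tangent cone to the graph; in this case the
tangent cone has dimension `n`. -/
theorem stmt_4 {n m : ℕ} (U : Set (Euc n)) (hU : IsOpen U) (f : Euc n → Euc m)
    (xb : Euc n) (hx : xb ∈ U) :
    (FrechetDiffOnAt f U xb ↔
      (CalmAt' f U xb ∧ IsLinearSubspace (tanCone (gphOn f U) (xb, f xb)))) ∧
    (FrechetDiffOnAt f U xb → HasDim (tanCone (gphOn f U) (xb, f xb)) n) := by
  constructor
  · constructor
    · rintro ⟨A, hA⟩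
      have hgr := tanCone_graph_eq U hU f xb hx A hA
      obtain ⟨S, hSeq, -⟩ := graph_submodule A
      refine ⟨?_, S, by rw [hSeq, hgr]⟩
      -- calmness
      obtain ⟨δ, hδ, hb⟩ := hA 1 one_pos
      refine ⟨U ∩ Metric.ball xb δ,
        Filter.inter_mem (hU.mem_nhds hx) (Metric.ball_mem_nhds xb hδ),
        Set.inter_subset_left, ‖A‖ + 1, by positivity, ?_⟩
      rintro x ⟨hxU, hxb⟩
      rw [Metric.mem_ball, dist_eq_norm] at hxb
      have h1 := hb x hxU hxb
      have h2 : ‖f x - f xb‖ ≤ ‖f x - f xb - A (x - xb)‖ + ‖A (x - xb)‖ := by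
        have := norm_add_le (f x - f xb - A (x - xb)) (A (x - xb))
        simpa using this
      have h3 := A.le_opNorm (x - xb)
      calc ‖f x - f xb‖ ≤ 1 * ‖x - xb‖ + ‖A‖ * ‖x - xb‖ := by linarith
        _ = (‖A‖ + 1) * ‖x - xb‖ := by ring
    · rintro ⟨hcalm, S, hSeq⟩
      exact frechet_of_calm_sub U hU f xb hx hcalm S hSeq
  · rintro ⟨A, hA⟩
    have hgr := tanCone_graph_eq U hU f xb hx A hA
    obtain ⟨S, hSeq, hrank⟩ := graph_submodule A
    exact ⟨S, by rw [hSeq, hgr], hrank⟩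
end
end

section
/- Let F: U → ℝᵐ be a single-valued mapping, U ⊆ ℝⁿ open, which is strictly continuous at x̄ ∈ U. Then F is strictly differentiable at x̄ if and only if the B-Jacobian ∇̄F(x̄) is a singleton. -/
open Filter Topology Metric Set
open scoped RealInnerProductSpace NNReal ENNReal

noncomputable section

section AuxStmt6

open MeasureTheory

lemma aux_1d {m : ℕ} (φ : ℝ → Euc m) (D : ℝ → Euc m) (L C : ℝ) (hL : 0 ≤ L) (hC : 0 ≤ C)
    (hlip : ∀ s ∈ Icc (0:ℝ) 2, ∀ t ∈ Icc (0:ℝ) 2, ‖φ s - φ t‖ ≤ L * |s - t|)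
    (hder : ∀ᵐ t ∂(volume.restrict (Icc (0:ℝ) 1)),
      HasDerivAt φ (D t) t ∧ ‖D t‖ ≤ C) :
    ‖φ 1 - φ 0‖ ≤ C := by
  set μ : Measure ℝ := volume.restrict (Icc (0:ℝ) 1) with hμ
  haveI : IsFiniteMeasure μ := by
    constructor
    rw [hμ, Measure.restrict_apply_univ, Real.volume_Icc]
    exact ENNReal.ofReal_lt_top
  have hcont : ContinuousOn φ (Icc (0:ℝ) 2) := by
    have : LipschitzOnWith L.toNNReal φ (Icc (0:ℝ) 2) := by
      apply LipschitzOnWith.of_dist_le'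
      intro s hs t ht
      simpa [dist_eq_norm, Real.dist_eq] using hlip s hs t ht
    exact this.continuousOn
  set h : ℕ → ℝ := fun j => (1:ℝ)/(j+1) with hh
  have hpos : ∀ j, 0 < h j := fun j => by positivity
  have hle1 : ∀ j, h j ≤ 1 := by
    intro j
    rw [hh]
    rw [div_le_one (by positivity)]
    exact le_add_of_nonneg_left (Nat.cast_nonneg j)
  have hto0 : Tendsto h atTop (𝓝 0) := tendsto_one_div_add_atTop_nhds_zero_nat
  set F : ℕ → ℝ → Euc m := fun j t => (h j)⁻¹ • (φ (t + h j) - φ t) with hF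
  -- measurability
  have F_meas : ∀ j, AEStronglyMeasurable (F j) μ := by
    intro j
    apply ContinuousOn.aestronglyMeasurable _ measurableSet_Icc
    show ContinuousOn (fun t => (h j)⁻¹ • (φ (t + h j) - φ t)) (Icc 0 1)
    refine ContinuousOn.const_smul (g := fun t => φ (t + h j) - φ t) ?_ (h j)⁻¹
    apply ContinuousOn.sub
    · apply (hcont.comp (continuous_id.add continuous_const).continuousOn)
      intro t ht
      show t + h j ∈ Icc (0:ℝ) 2
      constructor
      · show (0:ℝ) ≤ t + h j
        linarith [ht.1, (hpos j).le]
      · show t + h j ≤ 2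
        linarith [ht.2, hle1 j]
    · exact hcont.mono (Icc_subset_Icc le_rfl one_le_two)
  have bound_int : Integrable (fun _ : ℝ => L) μ := integrable_const L
  have h_bound : ∀ j, ∀ᵐ t ∂μ, ‖F j t‖ ≤ L := by
    intro j
    rw [hμ, ae_restrict_iff' measurableSet_Icc]
    apply Eventually.of_forall
    intro t ht
    have h1 : t ∈ Icc (0:ℝ) 2 := ⟨ht.1, by linarith [ht.2]⟩
    have h2 : t + h j ∈ Icc (0:ℝ) 2 := ⟨by linarith [ht.1, (hpos j).le], by linarith [ht.2, hle1 j]⟩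
    have := hlip (t + h j) h2 t h1
    rw [hF]
    simp only [norm_smul, norm_inv, Real.norm_eq_abs, abs_of_pos (hpos j)]
    rw [add_sub_cancel_left] at this
    rw [abs_of_pos (hpos j)] at this
    calc (h j)⁻¹ * ‖φ (t + h j) - φ t‖ ≤ (h j)⁻¹ * (L * h j) := by
          apply mul_le_mul_of_nonneg_left this (inv_nonneg.2 (hpos j).le)
      _ = L := by rw [mul_comm L (h j), ← mul_assoc, inv_mul_cancel₀ (hpos j).ne', one_mul]
  have h_lim : ∀ᵐ t ∂μ, Tendsto (fun j => F j t) atTop (𝓝 (D t)) := by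
    filter_upwards [hder] with t ht
    have hslope := hasDerivAt_iff_tendsto_slope.1 ht.1
    have htt : Tendsto (fun j => t + h j) atTop (𝓝[≠] t) := by
      apply tendsto_nhdsWithin_of_tendsto_nhds_of_eventually_within
      · simpa using tendsto_const_nhds.add hto0
      · exact Eventually.of_forall fun j => by
          simp only [mem_compl_iff, mem_singleton_iff]
          intro hc
          nlinarith [hpos j, congrArg (· - t) hc]
    have := hslope.comp htt
    convert this using 2 with j
    rw [hF]
    simp [slope_def_module]
  have hDCT : Tendsto (fun j => ∫ t, F j t ∂μ) atTop (𝓝 (∫ t, D t ∂μ)) :=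
    tendsto_integral_of_dominated_convergence (fun _ => L) F_meas bound_int h_bound h_lim
  -- compute the integrals of F j
  have hint : ∀ a b : ℝ, a ∈ Icc (0:ℝ) 2 → b ∈ Icc (0:ℝ) 2 → IntervalIntegrable φ volume a b := by
    intro a b ha hb
    apply ContinuousOn.intervalIntegrable
    exact hcont.mono (uIcc_subset_Icc ha hb)
  have key : ∀ j, ∫ t, F j t ∂μ
      = (h j)⁻¹ • ((∫ t in (1:ℝ)..(1 + h j), φ t) - ∫ t in (0:ℝ)..(h j), φ t) := by
    intro j
    have h0 : (0:ℝ) ∈ Icc (0:ℝ) 2 := by norm_num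
    have h1 : (1:ℝ) ∈ Icc (0:ℝ) 2 := by norm_num
    have hhj : h j ∈ Icc (0:ℝ) 2 := ⟨(hpos j).le, by linarith [hle1 j]⟩
    have h1h : 1 + h j ∈ Icc (0:ℝ) 2 := ⟨by linarith [(hpos j).le], by linarith [hle1 j]⟩
    have e1 : ∫ t, F j t ∂μ = ∫ t in (0:ℝ)..1, F j t := by
      rw [hμ, intervalIntegral.integral_of_le (by norm_num : (0:ℝ) ≤ 1),
        ← MeasureTheory.integral_Icc_eq_integral_Ioc]
    rw [e1, hF]
    rw [intervalIntegral.integral_smul]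
    have i1 : IntervalIntegrable (fun t => φ (t + h j)) volume 0 1 := by
      have i := (hint (h j) (1 + h j) hhj h1h).comp_add_right (h j)
      rw [sub_self, add_sub_cancel_right] at i
      exact i
    rw [intervalIntegral.integral_sub i1 (hint 0 1 h0 h1)]
    rw [intervalIntegral.integral_comp_add_right (fun t => φ t) (h j)]
    have s1 : (∫ t in (0:ℝ)..(h j), φ t) + ∫ t in (h j)..(1:ℝ), φ t = ∫ t in (0:ℝ)..(1:ℝ), φ t :=
      intervalIntegral.integral_add_adjacent_intervals (hint 0 (h j) h0 hhj) (hint (h j) 1 hhj h1)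
    have s2 : (∫ t in (h j)..(1:ℝ), φ t) + ∫ t in (1:ℝ)..(1 + h j), φ t
        = ∫ t in (h j)..(1 + h j), φ t :=
      intervalIntegral.integral_add_adjacent_intervals (hint (h j) 1 hhj h1) (hint 1 (1 + h j) h1 h1h)
    have : (0:ℝ) + h j = h j := by ring
    rw [this, show (1:ℝ) + h j = 1 + h j from rfl]
    congr 1
    rw [← s2, ← s1]
    abel
  -- second limit
  have hlim2 : Tendsto (fun j => ∫ t, F j t ∂μ) atTop (𝓝 (φ 1 - φ 0)) := by
    rw [tendsto_iff_norm_sub_tendsto_zero]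
    have hb := hto0.const_mul (2 * L)
    rw [mul_zero] at hb
    apply squeeze_zero (fun j => norm_nonneg _) _ hb
    intro j
    rw [key j]
    have h1 : (1:ℝ) ∈ Icc (0:ℝ) 2 := by norm_num
    have hhj : h j ∈ Icc (0:ℝ) 2 := ⟨(hpos j).le, by linarith [hle1 j]⟩
    have e2 : ((∫ t in (1:ℝ)..(1 + h j), φ t) - ∫ t in (0:ℝ)..(h j), φ t)
        = (∫ t in (1:ℝ)..(1 + h j), (φ t - φ 1)) - (∫ t in (0:ℝ)..(h j), (φ t - φ 0))
          + (h j) • (φ 1 - φ 0) := by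
      rw [intervalIntegral.integral_sub (hint 1 (1 + h j) h1 ⟨by linarith [(hpos j).le], by linarith [hle1 j]⟩) intervalIntegrable_const,
        intervalIntegral.integral_sub (hint 0 (h j) (by norm_num) hhj) intervalIntegrable_const]
      simp [intervalIntegral.integral_const]
      module
    rw [e2]
    have b1 : ‖∫ t in (1:ℝ)..(1 + h j), (φ t - φ 1)‖ ≤ (L * h j) * |1 + h j - 1| := by
      apply intervalIntegral.norm_integral_le_of_norm_le_const
      intro x hx
      rw [uIoc_of_le (by linarith [(hpos j).le])] at hx
      have hx2 : x ∈ Icc (0:ℝ) 2 := ⟨by linarith [hx.1.le], by linarith [hx.2, hle1 j]⟩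
      calc ‖φ x - φ 1‖ ≤ L * |x - 1| := hlip x hx2 1 h1
        _ ≤ L * h j := by
            apply mul_le_mul_of_nonneg_left _ hL
            rw [abs_of_nonneg (by linarith [hx.1.le])]
            linarith [hx.2]
    have b2 : ‖∫ t in (0:ℝ)..(h j), (φ t - φ 0)‖ ≤ (L * h j) * |h j - 0| := by
      apply intervalIntegral.norm_integral_le_of_norm_le_const
      intro x hx
      rw [uIoc_of_le (hpos j).le] at hx
      have hx2 : x ∈ Icc (0:ℝ) 2 := ⟨by linarith [hx.1.le], by linarith [hx.2, hle1 j]⟩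
      calc ‖φ x - φ 0‖ ≤ L * |x - 0| := hlip x hx2 0 (by norm_num)
        _ ≤ L * h j := by
            apply mul_le_mul_of_nonneg_left _ hL
            rw [sub_zero, abs_of_nonneg hx.1.le]
            exact hx.2
    have : (h j)⁻¹ • ((∫ t in (1:ℝ)..(1 + h j), (φ t - φ 1)) - (∫ t in (0:ℝ)..(h j), (φ t - φ 0))
          + (h j) • (φ 1 - φ 0)) - (φ 1 - φ 0)
        = (h j)⁻¹ • ((∫ t in (1:ℝ)..(1 + h j), (φ t - φ 1)) - (∫ t in (0:ℝ)..(h j), (φ t - φ 0))) := by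
      rw [smul_add, smul_smul, inv_mul_cancel₀ (hpos j).ne', one_smul]
      abel
    rw [this]
    rw [norm_smul, norm_inv, Real.norm_eq_abs, abs_of_pos (hpos j)]
    calc (h j)⁻¹ * ‖(∫ t in (1:ℝ)..(1 + h j), (φ t - φ 1)) - (∫ t in (0:ℝ)..(h j), (φ t - φ 0))‖
        ≤ (h j)⁻¹ * ((L * h j) * |1 + h j - 1| + (L * h j) * |h j - 0|) := by
          apply mul_le_mul_of_nonneg_left _ (inv_nonneg.2 (hpos j).le)
          exact le_trans (norm_sub_le _ _) (add_le_add b1 b2)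
      _ = 2 * L * h j := by
          rw [show (1:ℝ) + h j - 1 = h j by ring, sub_zero, abs_of_pos (hpos j)]
          field_simp
          ring
  have heq : φ 1 - φ 0 = ∫ t, D t ∂μ := tendsto_nhds_unique hlim2 hDCT
  rw [heq]
  calc ‖∫ t, D t ∂μ‖ ≤ C * (μ Set.univ).toReal := by
        apply norm_integral_le_of_norm_le_const
        filter_upwards [hder] with t ht using ht.2
    _ = C := by
        rw [hμ, Measure.restrict_apply_univ, Real.volume_Icc]
        norm_num

lemma aux_fubini {n : ℕ} (N : Set (Euc n)) (hN : MeasurableSet N) (h0 : volume N = 0)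
    (c v : Euc n) :
    ∀ᵐ h : Euc n, ∀ᵐ t : ℝ, c + h + t • v ∉ N := by
  set S' : Set (Euc n × ℝ) := (fun p : Euc n × ℝ => c + p.1 + p.2 • v) ⁻¹' N with hS'
  have hψc : Continuous (fun p : Euc n × ℝ => c + p.1 + p.2 • v) := by
    apply Continuous.add
    · exact continuous_const.add continuous_fst
    · exact continuous_snd.smul continuous_const
  have hS'm : MeasurableSet S' := hψc.measurable hN
  have hψ2c : Continuous (fun q : ℝ × Euc n => c + q.2 + q.1 • v) := by
    apply Continuous.add
    · exact continuous_const.add continuous_snd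
    · exact continuous_fst.smul continuous_const
  have hSm : MeasurableSet ((fun q : ℝ × Euc n => c + q.2 + q.1 • v) ⁻¹' N) :=
    hψ2c.measurable hN
  have hzero : ((volume : Measure ℝ).prod (volume : Measure (Euc n)))
      ((fun q : ℝ × Euc n => c + q.2 + q.1 • v) ⁻¹' N) = 0 := by
    rw [Measure.measure_prod_null hSm]
    apply Eventually.of_forall
    intro t
    have he : Prod.mk t ⁻¹' ((fun q : ℝ × Euc n => c + q.2 + q.1 • v) ⁻¹' N)
        = (fun h : Euc n => (c + t • v) + h) ⁻¹' N := by
      ext h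
      have hab : c + h + t • v = (c + t • v) + h := by abel
      rw [mem_preimage, mem_preimage, hab]
      rfl
    simp only [he, Pi.zero_apply]
    rw [measure_preimage_add]
    exact h0
  have hswap : ((volume : Measure (Euc n)).prod (volume : Measure ℝ)) S' = 0 := by
    have hps := Measure.prod_swap (μ := (volume : Measure ℝ)) (ν := (volume : Measure (Euc n)))
    rw [← hps, Measure.map_apply measurable_swap hS'm]
    have he : Prod.swap ⁻¹' S' = (fun q : ℝ × Euc n => c + q.2 + q.1 • v) ⁻¹' N := by
      ext q
      simp [hS', Prod.swap]
    rw [he]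
    exact hzero
  rw [Measure.measure_prod_null hS'm] at hswap
  filter_upwards [hswap] with h hh
  have : (volume : Measure ℝ) {t : ℝ | c + h + t • v ∈ N} = 0 := by
    have he : Prod.mk h ⁻¹' S' = {t : ℝ | c + h + t • v ∈ N} := rfl
    rw [← he]
    exact hh
  exact (measure_eq_zero_iff_ae_notMem.1 this)

lemma aux_derivclose {n m : ℕ} (U : Set (Euc n)) (f : Euc n → Euc m) (xb : Euc n)
    (ρ : ℝ) (hρ : 0 < ρ) (κ : ℝ≥0) (hlip : LipschitzOnWith κ f (ball xb ρ))
    (A : Euc n →L[ℝ] Euc m) (hBJ : BJacobian f U xb = {A})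
    (hball : ball xb ρ ⊆ U) (ε : ℝ) (hε : 0 < ε) :
    ∃ δ > 0, δ ≤ ρ ∧ ∀ y ∈ ball xb δ, ∀ B : Euc n →L[ℝ] Euc m,
      HasFDerivAt f B y → ‖B - A‖ ≤ ε := by
  by_contra hcon
  push_neg at hcon
  have hseq : ∀ k : ℕ, ∃ y, ∃ B : Euc n →L[ℝ] Euc m,
      y ∈ ball xb (min ρ ((1:ℝ)/(k+1))) ∧ HasFDerivAt f B y ∧ ε < ‖B - A‖ := by
    intro k
    have hδ : (0:ℝ) < min ρ ((1:ℝ)/(k+1)) := lt_min hρ (by positivity)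
    obtain ⟨y, hy, B, hB, hBA⟩ := hcon (min ρ ((1:ℝ)/(k+1))) hδ (min_le_left _ _)
    exact ⟨y, B, hy, hB, hBA⟩
  choose y B hy hB hBA using hseq
  have hyball : ∀ k, y k ∈ ball xb ρ := fun k =>
    ball_subset_ball (min_le_left _ _) (hy k)
  have hytend : Tendsto y atTop (𝓝 xb) := by
    rw [tendsto_iff_dist_tendsto_zero]
    apply squeeze_zero (fun k => dist_nonneg) (fun k => ?_)
      tendsto_one_div_add_atTop_nhds_zero_nat
    exact le_trans (mem_ball.1 (hy k)).le (min_le_right _ _)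
  have hBbdd : ∀ k, B k ∈ closedBall (0 : Euc n →L[ℝ] Euc m) κ := by
    intro k
    rw [mem_closedBall, dist_zero_right]
    exact (hB k).le_of_lipschitzOn ((isOpen_ball).mem_nhds (hyball k)) hlip
  haveI : ProperSpace (Euc n →L[ℝ] Euc m) := FiniteDimensional.proper ℝ _
  obtain ⟨Binf, -, φ, hφ, hBφ⟩ :=
    tendsto_subseq_of_bounded (isBounded_closedBall (x := (0 : Euc n →L[ℝ] Euc m)) (r := κ)) hBbdd
  have hmem : Binf ∈ BJacobian f U xb := by
    refine ⟨y ∘ φ, B ∘ φ, fun k => ⟨hball (hyball (φ k)), hB (φ k)⟩, ?_, hBφ⟩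
    exact hytend.comp hφ.tendsto_atTop
  rw [hBJ, mem_singleton_iff] at hmem
  have hlim : Tendsto (fun k => ‖B (φ k) - A‖) atTop (𝓝 ‖Binf - A‖) :=
    ((hBφ.sub tendsto_const_nhds).norm)
  have : ε ≤ ‖Binf - A‖ :=
    ge_of_tendsto hlim (Eventually.of_forall fun k => (hBA (φ k)).le)
  rw [hmem, sub_self, norm_zero] at this
  linarith

-- Forward direction
lemma aux_forward {n m : ℕ} (U : Set (Euc n)) (hU : IsOpen U) (f : Euc n → Euc m)
    (xb : Euc n) (hx : xb ∈ U) (A : Euc n →L[ℝ] Euc m)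
    (hP : ∀ ε : ℝ, 0 < ε → ∃ δ > 0, ∀ x ∈ U, ∀ x' ∈ U,
      ‖x - xb‖ < δ → ‖x' - xb‖ < δ → ‖f x' - f x - A (x' - x)‖ ≤ ε * ‖x' - x‖) :
    BJacobian f U xb = {A} := by
  have hfd : HasFDerivAt f A xb := by
    rw [hasFDerivAt_iff_isLittleO_nhds_zero, Asymptotics.isLittleO_iff]
    intro c hc
    obtain ⟨δ, hδ, hP'⟩ := hP c hc
    have hev : ∀ᶠ h in 𝓝 (0 : Euc n), xb + h ∈ U ∧ ‖h‖ < δ := by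
      have h1 : ∀ᶠ h in 𝓝 (0 : Euc n), xb + h ∈ U := by
        have : Continuous fun h : Euc n => xb + h := continuous_const.add continuous_id
        have := this.continuousAt (x := 0)
        apply this.preimage_mem_nhds
        simpa using hU.mem_nhds hx
      have h2 : ∀ᶠ h in 𝓝 (0 : Euc n), ‖h‖ < δ := by
        have := Metric.ball_mem_nhds (0 : Euc n) hδ
        filter_upwards [this] with h hh
        simpa [dist_eq_norm] using hh
      exact h1.and h2
    filter_upwards [hev] with h hh
    have := hP' xb hx (xb + h) hh.1 (by simp [hδ]) (by simpa using hh.2)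
    simpa using this
  ext B
  simp only [mem_singleton_iff]
  constructor
  · rintro ⟨xk, Ak, hk, hxk, hAk⟩
    have key : ∀ ε : ℝ, 0 < ε → ‖B - A‖ ≤ 2 * ε := by
      intro ε hε
      obtain ⟨δ, hδ, hP'⟩ := hP ε hε
      have hev : ∀ᶠ k in atTop, ‖xk k - xb‖ < δ / 2 := by
        have := hxk
        rw [tendsto_iff_norm_sub_tendsto_zero] at this
        exact this.eventually_lt_const (by positivity)
      have hbd : ∀ᶠ k in atTop, ‖Ak k - A‖ ≤ 2 * ε := by
        filter_upwards [hev] with k hk2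
        apply ContinuousLinearMap.opNorm_le_bound _ (by positivity)
        intro w
        rcases eq_or_ne w 0 with rfl | hw
        · simp
        -- find small t > 0
        have hmem : ∀ᶠ t in 𝓝[>] (0:ℝ),
            (xk k + t • w ∈ U ∧ ‖xk k + t • w - xb‖ < δ) ∧
            ‖f (xk k + t • w) - f (xk k) - (Ak k) ((xk k + t • w) - xk k)‖
              ≤ ε * ‖(xk k + t • w) - xk k‖ := by
          have hcont : Tendsto (fun t : ℝ => xk k + t • w) (𝓝[>] 0) (𝓝 (xk k)) := by
            apply Tendsto.mono_left _ nhdsWithin_le_nhds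
            have : Tendsto (fun t : ℝ => xk k + t • w) (𝓝 0) (𝓝 (xk k + (0:ℝ) • w)) := by
              apply Tendsto.const_add
              exact (tendsto_id.smul_const w)
            simpa using this
          have e1 : ∀ᶠ t in 𝓝[>] (0:ℝ), xk k + t • w ∈ U :=
            hcont.eventually_mem (hU.mem_nhds ((hk k).1))
          have e2 : ∀ᶠ t in 𝓝[>] (0:ℝ), ‖xk k + t • w - xb‖ < δ := by
            have : Tendsto (fun t : ℝ => ‖xk k + t • w - xb‖) (𝓝[>] 0) (𝓝 ‖xk k - xb‖) :=
              ((hcont.sub tendsto_const_nhds).norm)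
            exact this.eventually_lt_const (by linarith)
          have e3 : ∀ᶠ t in 𝓝[>] (0:ℝ),
              ‖f (xk k + t • w) - f (xk k) - (Ak k) ((xk k + t • w) - xk k)‖
                ≤ ε * ‖(xk k + t • w) - xk k‖ := by
            have := (hk k).2
            replace this := this.isLittleO
            rw [Asymptotics.isLittleO_iff] at this
            exact hcont.eventually (this hε)
          exact (e1.and e2).and e3
        obtain ⟨t, ⟨⟨htU, htδ⟩, hto⟩, ht⟩ := (hmem.and self_mem_nhdsWithin).exists
        have hdiff : (xk k + t • w) - xk k = t • w := by abel
        rw [hdiff] at hto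
        have hstrict := hP' (xk k) ((hk k).1) (xk k + t • w) htU (by linarith) htδ
        rw [hdiff] at hstrict
        have hcomb : ‖((Ak k) - A) (t • w)‖ ≤ 2 * ε * ‖t • w‖ := by
          have : ((Ak k) - A) (t • w)
              = (f (xk k + t • w) - f (xk k) - A (t • w))
                - (f (xk k + t • w) - f (xk k) - (Ak k) (t • w)) := by
            simp only [ContinuousLinearMap.sub_apply]
            abel
          rw [this]
          apply le_trans (norm_sub_le _ _)
          have h2 := add_le_add hstrict hto
          linarith
        have : ‖((Ak k) - A) w‖ = t⁻¹ * ‖((Ak k) - A) (t • w)‖ := by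
          rw [ContinuousLinearMap.map_smul, norm_smul, Real.norm_eq_abs, abs_of_pos ht]
          field_simp
        rw [this]
        calc t⁻¹ * ‖((Ak k) - A) (t • w)‖ ≤ t⁻¹ * (2 * ε * ‖t • w‖) := by
              apply mul_le_mul_of_nonneg_left hcomb (inv_nonneg.2 ht.le)
          _ = 2 * ε * ‖w‖ := by
              rw [norm_smul, Real.norm_eq_abs, abs_of_pos ht]
              field_simp
      have hlim : Tendsto (fun k => ‖Ak k - A‖) atTop (𝓝 ‖B - A‖) :=
        ((hAk.sub tendsto_const_nhds).norm)
      exact le_of_tendsto hlim hbd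
    have : ‖B - A‖ ≤ 0 := by
      apply le_of_forall_pos_le_add
      intro c hc
      simpa using (key (c/2) (by positivity)).trans (by linarith)
    rw [← sub_eq_zero]
    exact norm_le_zero_iff.1 this
  · rintro rfl
    exact ⟨fun _ => xb, fun _ => B, fun k => ⟨hx, hfd⟩, tendsto_const_nhds, tendsto_const_nhds⟩

set_option maxHeartbeats 1000000 in
lemma aux_backward {n m : ℕ} (U : Set (Euc n)) (hU : IsOpen U) (f : Euc n → Euc m)
    (xb : Euc n) (hx : xb ∈ U) (hsc : StrictlyContinuousAt' f U xb)
    (A : Euc n →L[ℝ] Euc m) (hBJ : BJacobian f U xb = {A}) :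
    StrictDiffOnAt f U xb := by
  obtain ⟨U', hU'n, hU'sub, κ₀, hκ₀, hlip0⟩ := hsc
  obtain ⟨ρ, hρ, hballU'⟩ := Metric.mem_nhds_iff.1 hU'n
  have hlipball : LipschitzOnWith κ₀.toNNReal f (ball xb ρ) := by
    apply LipschitzOnWith.of_dist_le'
    intro a ha b hb
    simp only [dist_eq_norm]
    exact hlip0 a (hballU' ha) b (hballU' hb)
  refine ⟨A, ?_⟩
  intro ε hε
  obtain ⟨δ₁, hδ₁, hδ₁ρ, hderb⟩ := aux_derivclose U f xb ρ hρ κ₀.toNNReal hlipball A hBJ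
    (hballU'.trans hU'sub) ε hε
  -- the Lipschitz/linear constant
  set L₀ : ℝ := κ₀ + ‖A‖ with hL₀
  have hL₀0 : 0 ≤ L₀ := add_nonneg hκ₀ (norm_nonneg _)
  -- pointwise Lipschitz estimate on the ball of radius ρ
  have hlipn : ∀ a ∈ ball xb ρ, ∀ b ∈ ball xb ρ,
      ‖(f a - A a) - (f b - A b)‖ ≤ L₀ * ‖a - b‖ := by
    intro a ha b hb
    have h1 : (f a - A a) - (f b - A b) = (f a - f b) - A (a - b) := by
      rw [map_sub]; abel
    rw [h1]
    calc ‖(f a - f b) - A (a - b)‖ ≤ ‖f a - f b‖ + ‖A (a - b)‖ := norm_sub_le _ _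
      _ ≤ κ₀ * ‖a - b‖ + ‖A‖ * ‖a - b‖ :=
          add_le_add (hlip0 a (hballU' ha) b (hballU' hb)) (A.le_opNorm _)
      _ = L₀ * ‖a - b‖ := by rw [hL₀]; ring
  -- Rademacher: the set of non-differentiability points in the ball is null
  have hae : ∀ᵐ y : Euc n, y ∈ ball xb δ₁ → DifferentiableAt ℝ f y := by
    have h1 := (hlipball.mono (ball_subset_ball hδ₁ρ)).ae_differentiableWithinAt_of_mem
      (μ := volume)
    filter_upwards [h1] with y hy hyb
    exact (hy hyb).differentiableAt ((isOpen_ball).mem_nhds hyb)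
  set N : Set (Euc n) := {y | y ∈ ball xb δ₁ ∧ ¬ DifferentiableAt ℝ f y} with hN
  have hN0 : volume N = 0 := by
    rw [← nonpos_iff_eq_zero]
    refine le_trans (measure_mono ?_) (le_of_eq (ae_iff.1 hae))
    intro y hy
    simp only [mem_setOf_eq, not_forall] at *
    exact ⟨hy.1, hy.2⟩
  obtain ⟨N', hNN', hN'm, hN'0⟩ := exists_measurable_superset_of_null hN0
  refine ⟨δ₁/8, by linarith, ?_⟩
  intro x hxU x' hx'U hxd hx'd
  rcases eq_or_ne x' x with rfl | hne
  · simp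
  set v : Euc n := x' - x with hv
  have hvn : ‖v‖ < δ₁/4 := by
    calc ‖v‖ = ‖(x' - xb) - (x - xb)‖ := by rw [hv]; congr 1; abel
      _ ≤ ‖x' - xb‖ + ‖x - xb‖ := norm_sub_le _ _
      _ < δ₁/4 := by linarith
  -- main estimate for every small r
  have key : ∀ r : ℝ, 0 < r → r ≤ δ₁/8 →
      ‖(f x' - A x') - (f x - A x)‖ ≤ ε * ‖v‖ + 2 * L₀ * r := by
    intro r hr hr8
    have hfull := aux_fubini N' hN'm hN'0 x v
    have hex : ∃ h, h ∈ ball (0 : Euc n) r ∧ (∀ᵐ t : ℝ, x + h + t • v ∉ N') := by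
      by_contra hc
      push_neg at hc
      have hsub : ball (0 : Euc n) r ⊆ {h | ¬ (∀ᵐ t : ℝ, x + h + t • v ∉ N')} :=
        fun h hh => hc h hh
      have hb0 : volume (ball (0 : Euc n) r) = 0 :=
        measure_mono_null hsub (ae_iff.1 hfull)
      exact absurd hb0 (measure_ball_pos volume _ hr).ne'
    obtain ⟨h, hhr, hht⟩ := hex
    rw [mem_ball, dist_zero_right] at hhr
    set c : Euc n := x + h with hc
    -- geometry: segment points are in the ball of radius δ₁
    have hgeom : ∀ t ∈ Icc (0:ℝ) 2, c + t • v ∈ ball xb δ₁ := by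
      intro t htI
      rw [mem_ball, dist_eq_norm]
      calc ‖c + t • v - xb‖ = ‖(x - xb) + h + t • v‖ := by rw [hc]; congr 1; abel
        _ ≤ ‖(x - xb) + h‖ + ‖t • v‖ := norm_add_le _ _
        _ ≤ ‖x - xb‖ + ‖h‖ + |t| * ‖v‖ := by
            rw [norm_smul, Real.norm_eq_abs]
            exact add_le_add (norm_add_le _ _) le_rfl
        _ < δ₁ := by
            have h1 : |t| ≤ 2 := abs_le.2 ⟨by linarith [htI.1], htI.2⟩
            have h2 : |t| * ‖v‖ ≤ 2 * ‖v‖ :=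
              mul_le_mul_of_nonneg_right h1 (norm_nonneg _)
            nlinarith [hvn, hxd, hhr]
    have hgeom' : ∀ t ∈ Icc (0:ℝ) 2, c + t • v ∈ ball xb ρ :=
      fun t htI => ball_subset_ball hδ₁ρ (hgeom t htI)
    set φ : ℝ → Euc m := fun t => f (c + t • v) - A (c + t • v) with hφ
    set D : ℝ → Euc m := fun t => (fderiv ℝ f (c + t • v)) v - A v with hD
    have hlipφ : ∀ s ∈ Icc (0:ℝ) 2, ∀ t ∈ Icc (0:ℝ) 2, ‖φ s - φ t‖ ≤ (L₀ * ‖v‖) * |s - t| := by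
      intro s hs t htI
      have := hlipn _ (hgeom' s hs) _ (hgeom' t htI)
      rw [hφ]
      simp only []
      refine le_trans this (le_of_eq ?_)
      have : c + s • v - (c + t • v) = (s - t) • v := by
        rw [sub_smul]; abel
      rw [this, norm_smul, Real.norm_eq_abs]
      ring
    have hderφ : ∀ᵐ t ∂(volume.restrict (Icc (0:ℝ) 1)),
        HasDerivAt φ (D t) t ∧ ‖D t‖ ≤ ε * ‖v‖ := by
      have h1 : ∀ᵐ t ∂(volume.restrict (Icc (0:ℝ) 1)), x + h + t • v ∉ N' :=
        ae_restrict_of_ae hht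
      filter_upwards [h1, ae_restrict_mem measurableSet_Icc] with t htN htI
      have htI2 : t ∈ Icc (0:ℝ) 2 := ⟨htI.1, by linarith [htI.2]⟩
      have hpt : c + t • v ∈ ball xb δ₁ := hgeom t htI2
      have hdiff : DifferentiableAt ℝ f (c + t • v) := by
        by_contra hnd
        exact htN (hNN' ⟨hpt, hnd⟩)
      have hfder := hdiff.hasFDerivAt
      have hclose : ‖fderiv ℝ f (c + t • v) - A‖ ≤ ε :=
        hderb _ hpt _ hfder
      have hline : HasDerivAt (fun t : ℝ => c + t • v) v t := by
        simpa using ((hasDerivAt_id t).smul_const v).const_add c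
      have hd1 : HasDerivAt (fun t : ℝ => f (c + t • v)) ((fderiv ℝ f (c + t • v)) v) t :=
        hfder.comp_hasDerivAt t hline
      have hd2 : HasDerivAt (fun t : ℝ => A (c + t • v)) (A v) t :=
        (A.hasFDerivAt).comp_hasDerivAt t hline
      constructor
      · exact hd1.sub hd2
      · have : D t = ((fderiv ℝ f (c + t • v)) - A) v := by
          rw [hD]; simp [ContinuousLinearMap.sub_apply]
        rw [this]
        calc ‖((fderiv ℝ f (c + t • v)) - A) v‖ ≤ ‖(fderiv ℝ f (c + t • v)) - A‖ * ‖v‖ :=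
              ContinuousLinearMap.le_opNorm _ _
          _ ≤ ε * ‖v‖ := mul_le_mul_of_nonneg_right hclose (norm_nonneg _)
    have hseg := aux_1d φ D (L₀ * ‖v‖) (ε * ‖v‖) (mul_nonneg hL₀0 (norm_nonneg _))
      (mul_nonneg hε.le (norm_nonneg _)) hlipφ hderφ
    -- φ 1 = f (x' + h) - A (x' + h), φ 0 = f (x + h) - A (x + h)
    have hφ1 : φ 1 = f (x' + h) - A (x' + h) := by
      rw [hφ]
      simp only [one_smul]
      congr 2 <;> (rw [hc, hv]; abel)
    have hφ0 : φ 0 = f (x + h) - A (x + h) := by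
      rw [hφ]
      simp only [zero_smul, add_zero]
      rw [hc]
    -- endpoints within r
    have hx'b : x' ∈ ball xb ρ := ball_subset_ball hδ₁ρ (by
      rw [mem_ball, dist_eq_norm]; linarith)
    have hxb' : x ∈ ball xb ρ := ball_subset_ball hδ₁ρ (by
      rw [mem_ball, dist_eq_norm]; linarith)
    have hx'hb : x' + h ∈ ball xb ρ := ball_subset_ball hδ₁ρ (by
      rw [mem_ball, dist_eq_norm]
      calc ‖x' + h - xb‖ ≤ ‖x' - xb‖ + ‖h‖ := by
            rw [show x' + h - xb = (x' - xb) + h by abel]; exact norm_add_le _ _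
        _ < δ₁ := by linarith)
    have hxhb : x + h ∈ ball xb ρ := ball_subset_ball hδ₁ρ (by
      rw [mem_ball, dist_eq_norm]
      calc ‖x + h - xb‖ ≤ ‖x - xb‖ + ‖h‖ := by
            rw [show x + h - xb = (x - xb) + h by abel]; exact norm_add_le _ _
        _ < δ₁ := by linarith)
    have t1 : ‖(f x' - A x') - (f (x' + h) - A (x' + h))‖ ≤ L₀ * r := by
      refine le_trans (hlipn _ hx'b _ hx'hb) ?_
      apply mul_le_mul_of_nonneg_left _ hL₀0
      rw [show x' - (x' + h) = -h by abel, norm_neg]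
      exact hhr.le
    have t0 : ‖(f (x + h) - A (x + h)) - (f x - A x)‖ ≤ L₀ * r := by
      refine le_trans (hlipn _ hxhb _ hxb') ?_
      apply mul_le_mul_of_nonneg_left _ hL₀0
      rw [show x + h - x = h by abel]
      exact hhr.le
    calc ‖(f x' - A x') - (f x - A x)‖
        = ‖((f x' - A x') - (f (x' + h) - A (x' + h))) + (φ 1 - φ 0)
            + ((f (x + h) - A (x + h)) - (f x - A x))‖ := by
          rw [hφ1, hφ0]; congr 1; abel
      _ ≤ ‖(f x' - A x') - (f (x' + h) - A (x' + h))‖ + ‖φ 1 - φ 0‖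
            + ‖(f (x + h) - A (x + h)) - (f x - A x)‖ := norm_add₃_le
      _ ≤ L₀ * r + ε * ‖v‖ + L₀ * r := by
          exact add_le_add (add_le_add t1 hseg) t0
      _ = ε * ‖v‖ + 2 * L₀ * r := by ring
  -- conclude
  have hgoal : ‖f x' - f x - A (x' - x)‖ ≤ ε * ‖v‖ := by
    have heq : f x' - f x - A (x' - x) = (f x' - A x') - (f x - A x) := by
      rw [map_sub]; abel
    rw [heq]
    apply le_of_forall_pos_le_add
    intro η hη
    obtain ⟨r, hr0, h1, hr8⟩ : ∃ r : ℝ, 0 < r ∧ r ≤ η / (2 * L₀ + 1) ∧ r ≤ δ₁/8 :=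
      ⟨min (η / (2 * L₀ + 1)) (δ₁/8), lt_min (div_pos hη (by linarith)) (by linarith),
        min_le_left _ _, min_le_right _ _⟩
    refine le_trans (key r hr0 hr8) ?_
    have h3 : 2 * L₀ * r ≤ η := by
      have h2 : 2 * L₀ * r ≤ 2 * L₀ * (η / (2 * L₀ + 1)) :=
        mul_le_mul_of_nonneg_left h1 (by linarith)
      refine le_trans h2 ?_
      rw [← mul_div_assoc, div_le_iff₀ (by linarith)]
      nlinarith [hη, hL₀0]
    linarith
  exact hgoal

end AuxStmt6

/-- a strictly continuous single-valued mapping is strictly differentiable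
at `xb` if and only if its B-Jacobian at `xb` is a singleton. -/
theorem stmt_6 {n m : ℕ} (U : Set (Euc n)) (hU : IsOpen U) (f : Euc n → Euc m)
    (xb : Euc n) (hx : xb ∈ U) (hsc : StrictlyContinuousAt' f U xb) :
    StrictDiffOnAt f U xb ↔ ∃ A : Euc n →L[ℝ] Euc m, BJacobian f U xb = {A} := by
  constructor
  · rintro ⟨A, hA⟩
    exact ⟨A, aux_forward U hU f xb hx A hA⟩
  · rintro ⟨A, hA⟩
    exact aux_backward U hU f xb hx hsc A hA
end
end

section
/- Assume that Ω ⊆ ℝⁿ is a Lipschitz manifold of dimension d around z̄ ∈ Ω. If the paratingent cone T^P_Ω(z̄) is a linear subspace, then dim T^P_Ω(z̄) = d. Further, if the limiting normal cone N_Ω(z̄) is a linear subspace, then dim N_Ω(z̄) = n − d. -/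
open Filter Topology Metric Set
open scoped RealInnerProductSpace NNReal ENNReal

noncomputable section

section AuxCones

variable {X Y : Type*} [NormedAddCommGroup X] [NormedSpace ℝ X]
  [NormedAddCommGroup Y] [NormedSpace ℝ Y]

lemma tanCone_subset_paraCone {Ω : Set X} {z : X} (hz : z ∈ Ω) :
    tanCone Ω z ⊆ paraCone Ω z := by
  rintro w ⟨t, wk, ht0, ht, hwk, hmem⟩
  exact ⟨fun _ => z, t, wk, fun _ => hz, tendsto_const_nhds, ht0, ht, hwk, hmem⟩

lemma tanCone_mono {Ω₁ Ω₂ : Set X} (h : Ω₁ ⊆ Ω₂) (z : X) :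
    tanCone Ω₁ z ⊆ tanCone Ω₂ z := by
  rintro w ⟨t, wk, ht0, ht, hwk, hmem⟩
  exact ⟨t, wk, ht0, ht, hwk, fun k => h (hmem k)⟩

lemma paraCone_mono {Ω₁ Ω₂ : Set X} (h : Ω₁ ⊆ Ω₂) (z : X) :
    paraCone Ω₁ z ⊆ paraCone Ω₂ z := by
  rintro w ⟨zk, t, wk, hm, hz, ht0, ht, hwk, hmem⟩
  exact ⟨zk, t, wk, fun k => h (hm k), hz, ht0, ht, hwk, fun k => h (hmem k)⟩

lemma tendsto_shift {α : Type*} {u : ℕ → α} {l : Filter α} (N : ℕ)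
    (h : Tendsto u atTop l) : Tendsto (fun k => u (k + N)) atTop l :=
  h.comp (tendsto_add_atTop_nat N)

lemma tanCone_inter_nhds {Ω W : Set X} {z : X} (hW : W ∈ 𝓝 z) :
    tanCone Ω z = tanCone (Ω ∩ W) z := by
  refine Subset.antisymm ?_ (tanCone_mono inter_subset_left z)
  rintro w ⟨t, wk, ht0, ht, hwk, hmem⟩
  have h1 : Tendsto (fun k => z + t k • wk k) atTop (𝓝 z) := by
    have : Tendsto (fun k => t k • wk k) atTop (𝓝 ((0:ℝ) • w)) := ht.smul hwk
    rw [zero_smul] at this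
    simpa using tendsto_const_nhds.add this
  obtain ⟨N, hN⟩ := eventually_atTop.mp (h1.eventually hW)
  exact ⟨fun k => t (k + N), fun k => wk (k + N), fun k => ht0 _, tendsto_shift N ht,
    tendsto_shift N hwk, fun k => ⟨hmem _, hN (k + N) (by omega)⟩⟩

lemma paraCone_inter_nhds {Ω W : Set X} {z : X} (hW : W ∈ 𝓝 z) :
    paraCone Ω z = paraCone (Ω ∩ W) z := by
  refine Subset.antisymm ?_ (paraCone_mono inter_subset_left z)
  rintro w ⟨zk, t, wk, hm, hz, ht0, ht, hwk, hmem⟩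
  have h1 : Tendsto (fun k => zk k + t k • wk k) atTop (𝓝 z) := by
    have : Tendsto (fun k => t k • wk k) atTop (𝓝 ((0:ℝ) • w)) := ht.smul hwk
    rw [zero_smul] at this
    simpa using hz.add this
  obtain ⟨N, hN⟩ := eventually_atTop.mp ((h1.eventually hW).and (hz.eventually hW))
  exact ⟨fun k => zk (k + N), fun k => t (k + N), fun k => wk (k + N),
    fun k => ⟨hm _, (hN (k + N) (by omega)).2⟩, tendsto_shift N hz, fun k => ht0 _,
    tendsto_shift N ht, tendsto_shift N hwk,
    fun k => ⟨hmem _, (hN (k + N) (by omega)).1⟩⟩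

/-- difference-quotient convergence for strictly differentiable maps, moving base point -/
lemma strict_quot_tendsto {g : X → Y} {B : X →L[ℝ] Y} {z : X}
    (hg : HasStrictFDerivAt g B z) {zk : ℕ → X} {t : ℕ → ℝ} {wk : ℕ → X} {w : X}
    (hzk : Tendsto zk atTop (𝓝 z)) (ht0 : ∀ k, 0 < t k) (ht : Tendsto t atTop (𝓝 0))
    (hwk : Tendsto wk atTop (𝓝 w)) :
    Tendsto (fun k => (t k)⁻¹ • (g (zk k + t k • wk k) - g (zk k))) atTop (𝓝 (B w)) := by
  have hsm : Tendsto (fun k => t k • wk k) atTop (𝓝 0) := by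
    have := ht.smul hwk; rwa [zero_smul] at this
  have hp : Tendsto (fun k => ((zk k + t k • wk k : X), zk k)) atTop (𝓝 (z, z)) := by
    refine Tendsto.prodMk_nhds ?_ hzk
    simpa using hzk.add hsm
  have hM : ∀ᶠ k in atTop, ‖wk k‖ ≤ ‖w‖ + 1 := by
    have := hwk.norm
    exact this.eventually (eventually_le_nhds (by linarith [norm_nonneg w]))
  have key : Tendsto (fun k => (t k)⁻¹ • (g (zk k + t k • wk k) - g (zk k)) - B (wk k))
      atTop (𝓝 0) := by
    rw [NormedAddCommGroup.tendsto_nhds_zero]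
    intro ε hε
    have hM1 : (0:ℝ) < ‖w‖ + 1 := by linarith [norm_nonneg w]
    have hc : (0:ℝ) < ε / (2 * (‖w‖ + 1)) := by positivity
    filter_upwards [hp.eventually (hg.isLittleO.def hc), hM] with k h1 h2
    have htk := ht0 k
    have hre : (t k)⁻¹ • (g (zk k + t k • wk k) - g (zk k)) - B (wk k)
        = (t k)⁻¹ • (g (zk k + t k • wk k) - g (zk k) - B ((zk k + t k • wk k) - zk k)) := by
      rw [add_sub_cancel_left, map_smul, smul_sub, smul_sub, smul_sub, inv_smul_smul₀ htk.ne']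
    rw [hre, norm_smul, norm_inv, Real.norm_eq_abs, abs_of_pos htk]
    calc (t k)⁻¹ * ‖g (zk k + t k • wk k) - g (zk k) - B (zk k + t k • wk k - zk k)‖
        ≤ (t k)⁻¹ * (ε / (2 * (‖w‖ + 1)) * ‖zk k + t k • wk k - zk k‖) := by
          exact mul_le_mul_of_nonneg_left h1 (by positivity)
      _ = ε / (2 * (‖w‖ + 1)) * ‖wk k‖ := by
          rw [add_sub_cancel_left, norm_smul, Real.norm_eq_abs, abs_of_pos htk]
          field_simp
      _ ≤ ε / (2 * (‖w‖ + 1)) * (‖w‖ + 1) := by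
          exact mul_le_mul_of_nonneg_left h2 (le_of_lt hc)
      _ = ε / 2 := by field_simp
      _ < ε := by linarith
  have hB : Tendsto (fun k => B (wk k)) atTop (𝓝 (B w)) :=
    (B.continuous.tendsto w).comp hwk
  have := key.add hB
  rw [zero_add] at this
  simpa using this

/-- difference-quotient convergence for differentiable maps, fixed base point -/
lemma fderiv_quot_tendsto {g : X → Y} {B : X →L[ℝ] Y} {z : X}
    (hg : HasFDerivAt g B z) {t : ℕ → ℝ} {wk : ℕ → X} {w : X}
    (ht0 : ∀ k, 0 < t k) (ht : Tendsto t atTop (𝓝 0))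
    (hwk : Tendsto wk atTop (𝓝 w)) :
    Tendsto (fun k => (t k)⁻¹ • (g (z + t k • wk k) - g z)) atTop (𝓝 (B w)) := by
  have hsm : Tendsto (fun k => t k • wk k) atTop (𝓝 0) := by
    have := ht.smul hwk; rwa [zero_smul] at this
  have hp : Tendsto (fun k => (z + t k • wk k : X)) atTop (𝓝 z) := by
    simpa using tendsto_const_nhds.add hsm
  have hM : ∀ᶠ k in atTop, ‖wk k‖ ≤ ‖w‖ + 1 := by
    exact hwk.norm.eventually (eventually_le_nhds (by linarith [norm_nonneg w]))
  have key : Tendsto (fun k => (t k)⁻¹ • (g (z + t k • wk k) - g z) - B (wk k))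
      atTop (𝓝 0) := by
    rw [NormedAddCommGroup.tendsto_nhds_zero]
    intro ε hε
    have hM1 : (0:ℝ) < ‖w‖ + 1 := by linarith [norm_nonneg w]
    have hc : (0:ℝ) < ε / (2 * (‖w‖ + 1)) := by positivity
    filter_upwards [hp.eventually (hg.isLittleO.def hc), hM] with k h1 h2
    have htk := ht0 k
    have hre : (t k)⁻¹ • (g (z + t k • wk k) - g z) - B (wk k)
        = (t k)⁻¹ • (g (z + t k • wk k) - g z - B ((z + t k • wk k) - z)) := by
      rw [add_sub_cancel_left, map_smul, smul_sub, smul_sub, smul_sub, inv_smul_smul₀ htk.ne']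
    rw [hre, norm_smul, norm_inv, Real.norm_eq_abs, abs_of_pos htk]
    calc (t k)⁻¹ * ‖g (z + t k • wk k) - g z - B (z + t k • wk k - z)‖
        ≤ (t k)⁻¹ * (ε / (2 * (‖w‖ + 1)) * ‖z + t k • wk k - z‖) := by
          exact mul_le_mul_of_nonneg_left h1 (by positivity)
      _ = ε / (2 * (‖w‖ + 1)) * ‖wk k‖ := by
          rw [add_sub_cancel_left, norm_smul, Real.norm_eq_abs, abs_of_pos htk]
          field_simp
      _ ≤ ε / (2 * (‖w‖ + 1)) * (‖w‖ + 1) := by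
          exact mul_le_mul_of_nonneg_left h2 (le_of_lt hc)
      _ = ε / 2 := by field_simp
      _ < ε := by linarith
  have hB : Tendsto (fun k => B (wk k)) atTop (𝓝 (B w)) :=
    (B.continuous.tendsto w).comp hwk
  have := key.add hB
  rw [zero_add] at this
  simpa using this

lemma paraCone_image {Ω : Set X} {z : X} {g : X → Y} {B : X →L[ℝ] Y}
    (hg : HasStrictFDerivAt g B z) {w : X} (hw : w ∈ paraCone Ω z) :
    B w ∈ paraCone (g '' Ω) (g z) := by
  obtain ⟨zk, t, wk, hm, hz, ht0, ht, hwk, hmem⟩ := hw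
  refine ⟨fun k => g (zk k), t, fun k => (t k)⁻¹ • (g (zk k + t k • wk k) - g (zk k)),
    fun k => mem_image_of_mem g (hm k), hg.continuousAt.tendsto.comp hz, ht0, ht,
    strict_quot_tendsto hg hz ht0 ht hwk, fun k => ?_⟩
  have : g (zk k) + t k • ((t k)⁻¹ • (g (zk k + t k • wk k) - g (zk k)))
      = g (zk k + t k • wk k) := by
    rw [smul_inv_smul₀ (ht0 k).ne']; abel
  rw [this]; exact mem_image_of_mem g (hmem k)

lemma tanCone_image {Ω : Set X} {z : X} {g : X → Y} {B : X →L[ℝ] Y}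
    (hg : HasFDerivAt g B z) {w : X} (hw : w ∈ tanCone Ω z) :
    B w ∈ tanCone (g '' Ω) (g z) := by
  obtain ⟨t, wk, ht0, ht, hwk, hmem⟩ := hw
  refine ⟨t, fun k => (t k)⁻¹ • (g (z + t k • wk k) - g z), ht0, ht,
    fderiv_quot_tendsto hg ht0 ht hwk, fun k => ?_⟩
  have : g z + t k • ((t k)⁻¹ • (g (z + t k • wk k) - g z)) = g (z + t k • wk k) := by
    rw [smul_inv_smul₀ (ht0 k).ne']; abel
  rw [this]; exact mem_image_of_mem g (hmem k)

lemma tendsto_clm_apply' {Mk : ℕ → X →L[ℝ] Y} {M : X →L[ℝ] Y} {xk : ℕ → X} {x : X}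
    (hM : Tendsto Mk atTop (𝓝 M)) (hx : Tendsto xk atTop (𝓝 x)) :
    Tendsto (fun k => Mk k (xk k)) atTop (𝓝 (M x)) :=
  ((isBoundedBilinearMap_apply (𝕜 := ℝ) (E := X) (F := Y)).continuous.tendsto
    (M, x)).comp (hM.prodMk_nhds hx)

end AuxCones

section GraphLemmas

variable {E1 E2 : Type*} [NormedAddCommGroup E1] [NormedSpace ℝ E1]
  [NormedAddCommGroup E2] [NormedSpace ℝ E2]

lemma graph_tan_lower [ProperSpace E2] {U : Set E1} (hU : IsOpen U) {f : E1 → E2} {K : ℝ≥0}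
    (hf : LipschitzOnWith K f U) {x : E1} (hx : x ∈ U) (u : E1) :
    ∃ w : E2, ‖w‖ ≤ K * ‖u‖ ∧
      (u, w) ∈ tanCone {p : E1 × E2 | p.1 ∈ U ∧ p.2 = f p.1} (x, f x) := by
  obtain ⟨δ, hδ, hball⟩ := Metric.isOpen_iff.mp hU x hx
  have hu1 : (0:ℝ) < ‖u‖ + 1 := by linarith [norm_nonneg u]
  set c : ℝ := δ / (2 * (‖u‖ + 1)) with hc
  have hc0 : 0 < c := by positivity
  set t : ℕ → ℝ := fun k => c / (k + 1) with htdef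
  have ht0 : ∀ k, 0 < t k := fun k => by positivity
  have ht : Tendsto t atTop (𝓝 0) := by
    have h1 : Tendsto (fun k : ℕ => 1 / ((k:ℝ) + 1)) atTop (𝓝 0) :=
      tendsto_one_div_add_atTop_nhds_zero_nat
    have h2 := h1.const_mul c
    rw [mul_zero] at h2
    exact h2.congr fun k => mul_one_div c _
  have htle : ∀ k, t k ≤ c := by
    intro k
    apply div_le_self hc0.le
    have : (0:ℝ) ≤ (k:ℝ) := Nat.cast_nonneg k
    linarith
  have hmemU : ∀ k, x + t k • u ∈ U := by
    intro k
    apply hball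
    rw [mem_ball_iff_norm']
    have h1 : ‖x - (x + t k • u)‖ = t k * ‖u‖ := by
      rw [show x - (x + t k • u) = -(t k • u) by abel, norm_neg, norm_smul,
        Real.norm_eq_abs, abs_of_pos (ht0 k)]
    rw [h1]
    have h2 : t k * ‖u‖ ≤ c * ‖u‖ :=
      mul_le_mul_of_nonneg_right (htle k) (norm_nonneg u)
    have h3 : c * ‖u‖ < δ := by
      rw [hc, div_mul_eq_mul_div, div_lt_iff₀ (by positivity)]
      nlinarith [norm_nonneg u]
    linarith
  set wk2 : ℕ → E2 := fun k => (t k)⁻¹ • (f (x + t k • u) - f x) with hwk2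
  have hwb : ∀ k, ‖wk2 k‖ ≤ K * ‖u‖ := by
    intro k
    rw [hwk2]
    simp only
    rw [norm_smul, norm_inv, Real.norm_eq_abs, abs_of_pos (ht0 k)]
    rw [inv_mul_le_iff₀ (ht0 k)]
    have h1 : ‖f (x + t k • u) - f x‖ ≤ K * ‖(x + t k • u) - x‖ := by
      have := hf.dist_le_mul _ (hmemU k) _ hx
      rwa [dist_eq_norm, dist_eq_norm] at this
    have h2 : ‖(x + t k • u) - x‖ = t k * ‖u‖ := by
      rw [add_sub_cancel_left, norm_smul, Real.norm_eq_abs, abs_of_pos (ht0 k)]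
    rw [h2] at h1
    calc ‖f (x + t k • u) - f x‖ ≤ K * (t k * ‖u‖) := h1
      _ = t k * (K * ‖u‖) := by ring
  obtain ⟨w, hwcl, φ, hφ, hwconv⟩ := tendsto_subseq_of_bounded
    (isBounded_closedBall (x := (0:E2)) (r := K * ‖u‖))
    (fun k => mem_closedBall_zero_iff.mpr (hwb k))
  rw [closure_closedBall] at hwcl
  refine ⟨w, mem_closedBall_zero_iff.mp hwcl,
    fun k => t (φ k), fun k => (u, wk2 (φ k)), fun k => ht0 _,
    ht.comp hφ.tendsto_atTop, tendsto_const_nhds.prodMk_nhds hwconv, fun k => ?_⟩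
  refine ⟨?_, ?_⟩
  · show x + t (φ k) • u ∈ U
    exact hmemU _
  · show f x + t (φ k) • wk2 (φ k) = f (x + t (φ k) • u)
    rw [hwk2]
    simp only
    rw [smul_inv_smul₀ (ht0 (φ k)).ne', add_sub_cancel]

lemma graph_para_upper {U : Set E1} {f : E1 → E2} {K : ℝ≥0}
    (hf : LipschitzOnWith K f U) {p : E1 × E2} {w : E1 × E2}
    (hw : w ∈ paraCone {p : E1 × E2 | p.1 ∈ U ∧ p.2 = f p.1} p) :
    ‖w.2‖ ≤ K * ‖w.1‖ := by
  obtain ⟨zk, t, wk, hm, hz, ht0, ht, hwk, hmem⟩ := hw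
  have key : ∀ k, ‖(wk k).2‖ ≤ K * ‖(wk k).1‖ := by
    intro k
    have h1 : (zk k).1 ∈ U := (hm k).1
    have h2 : (zk k).2 = f (zk k).1 := (hm k).2
    have h3 : (zk k).1 + t k • (wk k).1 ∈ U := (hmem k).1
    have h4 : (zk k).2 + t k • (wk k).2 = f ((zk k).1 + t k • (wk k).1) := (hmem k).2
    have h5 : ‖f ((zk k).1 + t k • (wk k).1) - f ((zk k).1)‖
        ≤ K * ‖((zk k).1 + t k • (wk k).1) - (zk k).1‖ := by
      have := hf.dist_le_mul _ h3 _ h1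
      rwa [dist_eq_norm, dist_eq_norm] at this
    rw [← h4, h2, add_sub_cancel_left, add_sub_cancel_left, norm_smul, norm_smul,
      Real.norm_eq_abs, abs_of_pos (ht0 k)] at h5
    have htk := ht0 k
    calc ‖(wk k).2‖ = (t k)⁻¹ * (t k * ‖(wk k).2‖) := by field_simp
      _ ≤ (t k)⁻¹ * (K * (t k * ‖(wk k).1‖)) := by
          apply mul_le_mul_of_nonneg_left _ (by positivity)
          exact h5
      _ = K * ‖(wk k).1‖ := by field_simp
  have h1 : Tendsto (fun k => ‖(wk k).2‖) atTop (𝓝 ‖w.2‖) :=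
    (continuous_norm.tendsto _).comp ((continuous_snd.tendsto _).comp hwk)
  have h2 : Tendsto (fun k => (K:ℝ) * ‖(wk k).1‖) atTop (𝓝 ((K:ℝ) * ‖w.1‖)) :=
    (((continuous_norm.tendsto _).comp ((continuous_fst.tendsto _).comp hwk)).const_mul _)
  exact le_of_tendsto_of_tendsto' h1 h2 key

lemma graph_tan_upper {U : Set E1} {f : E1 → E2} {A : E1 →L[ℝ] E2} {x : E1}
    (hA : HasFDerivAt f A x) {w : E1 × E2}
    (hw : w ∈ tanCone {p : E1 × E2 | p.1 ∈ U ∧ p.2 = f p.1} (x, f x)) :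
    w.2 = A w.1 := by
  obtain ⟨t, wk, ht0, ht, hwk, hmem⟩ := hw
  have hu : Tendsto (fun k => (wk k).1) atTop (𝓝 w.1) :=
    (continuous_fst.tendsto _).comp hwk
  have hq := fderiv_quot_tendsto hA ht0 ht hu
  have heq : ∀ k, (t k)⁻¹ • (f (x + t k • (wk k).1) - f x) = (wk k).2 := by
    intro k
    have h4 : f x + t k • (wk k).2 = f (x + t k • (wk k).1) := (hmem k).2
    rw [← h4, add_sub_cancel_left, inv_smul_smul₀ (ht0 k).ne']
  rw [tendsto_congr heq] at hq
  have h2 : Tendsto (fun k => (wk k).2) atTop (𝓝 w.2) :=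
    (continuous_snd.tendsto _).comp hwk
  exact tendsto_nhds_unique h2 hq

end GraphLemmas

set_option maxHeartbeats 2000000 in
/-- Lemma 2.13: on a `d`-dimensional Lipschitz manifold, the paratingent
cone, if a subspace, has dimension `d`, and the limiting normal cone, if a subspace,
has dimension `n - d`. -/
theorem stmt_7 {n d : ℕ} (hdn : d ≤ n) (Ω : Set (Euc n)) (zb : Euc n) (hz : zb ∈ Ω)
    (hman : IsLipschitzManifoldAt Ω d (n - d) zb) :
    (IsLinearSubspace (paraCone Ω zb) → HasDim (paraCone Ω zb) d) ∧
    (IsLinearSubspace (limNormal Ω zb) → HasDim (limNormal Ω zb) (n - d)) := by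
  classical
  obtain ⟨W, Φ, Ψ, U, f, K, hWo, hzW, hΦWo, hΦc, hΨc, hΨΦ, hΦΨ, hUo, hf, hgraph⟩ := hman
  have hzbW : zb ∈ Ω ∩ W := ⟨hz, hzW⟩
  have hΦzb_mem : Φ zb ∈ Φ '' W := mem_image_of_mem _ hzW
  have hΦzbG : (Φ zb).1 ∈ U ∧ (Φ zb).2 = f (Φ zb).1 := by
    have h1 : Φ zb ∈ Φ '' (Ω ∩ W) := mem_image_of_mem _ hzbW
    rwa [hgraph] at h1
  -- derivatives
  have hΦca : ContDiffAt ℝ 1 Φ zb := hΦc.contDiffAt (hWo.mem_nhds hzW)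
  have hB : HasStrictFDerivAt Φ (fderiv ℝ Φ zb) zb := hΦca.hasStrictFDerivAt one_ne_zero
  set B := fderiv ℝ Φ zb with hBdef
  have hΨca : ContDiffAt ℝ 1 Ψ (Φ zb) := hΨc.contDiffAt (hΦWo.mem_nhds hΦzb_mem)
  have hC : HasStrictFDerivAt Ψ (fderiv ℝ Ψ (Φ zb)) (Φ zb) := hΨca.hasStrictFDerivAt one_ne_zero
  set C := fderiv ℝ Ψ (Φ zb) with hCdef
  -- inverse identities
  have hCB : ∀ v : Euc n, C (B v) = v := by
    have h1 : HasStrictFDerivAt (Ψ ∘ Φ) (C.comp B) zb := hC.comp zb hB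
    have heq : (Ψ ∘ Φ) =ᶠ[𝓝 zb] id := by
      filter_upwards [hWo.mem_nhds hzW] with x hx using hΨΦ x hx
    have h2 : HasStrictFDerivAt id (C.comp B) zb :=
      (heq.hasStrictFDerivAt_iff (fun _ => rfl)).mp h1
    have h3 : C.comp B = ContinuousLinearMap.id ℝ (Euc n) :=
      h2.hasFDerivAt.unique (hasFDerivAt_id zb)
    intro v
    have := congrArg (fun (M : Euc n →L[ℝ] Euc n) => M v) h3
    simpa using this
  have hBC : ∀ p : Euc d × Euc (n - d), B (C p) = p := by
    have hB' : HasStrictFDerivAt Φ B (Ψ (Φ zb)) := by rw [hΨΦ zb hzW]; exact hB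
    have h1 : HasStrictFDerivAt (Φ ∘ Ψ) (B.comp C) (Φ zb) := hB'.comp (Φ zb) hC
    have heq : (Φ ∘ Ψ) =ᶠ[𝓝 (Φ zb)] id := by
      filter_upwards [hΦWo.mem_nhds hΦzb_mem] with y hy using hΦΨ y hy
    have h2 : HasStrictFDerivAt id (B.comp C) (Φ zb) :=
      (heq.hasStrictFDerivAt_iff (fun _ => rfl)).mp h1
    have h3 : B.comp C = ContinuousLinearMap.id ℝ (Euc d × Euc (n - d)) :=
      h2.hasFDerivAt.unique (hasFDerivAt_id (Φ zb))
    intro p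
    have := congrArg (fun (M : (Euc d × Euc (n-d)) →L[ℝ] (Euc d × Euc (n-d))) => M p) h3
    simpa using this
  have hΨG : Ψ '' {p : Euc d × Euc (n - d) | p.1 ∈ U ∧ p.2 = f p.1} = Ω ∩ W := by
    rw [← hgraph, ← image_comp]
    have h1 : ∀ x ∈ Ω ∩ W, (Ψ ∘ Φ) x = x := fun x hx => hΨΦ x hx.2
    rw [image_congr h1]
    exact image_id' _
  constructor
  · -- paratingent cone
    rintro ⟨S, hS⟩
    have hP1 : ∀ v ∈ paraCone Ω zb, ‖(B v).2‖ ≤ K * ‖(B v).1‖ := by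
      intro v hv
      rw [paraCone_inter_nhds (hWo.mem_nhds hzW)] at hv
      have h2 : B v ∈ paraCone (Φ '' (Ω ∩ W)) (Φ zb) := paraCone_image hB hv
      rw [hgraph] at h2
      exact graph_para_upper hf h2
    have hP3 : ∀ u : Euc d, ∃ v ∈ paraCone Ω zb, (B v).1 = u := by
      intro u
      obtain ⟨w, hw, hmem⟩ := graph_tan_lower hUo hf hΦzbG.1 u
      have hpt : (((Φ zb).1 : Euc d), f (Φ zb).1) = Φ zb := by
        exact Prod.ext_iff.mpr ⟨rfl, hΦzbG.2.symm⟩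
      rw [hpt] at hmem
      have hmem' : (u, w) ∈ paraCone {p : Euc d × Euc (n-d) | p.1 ∈ U ∧ p.2 = f p.1} (Φ zb) :=
        tanCone_subset_paraCone (Ω := {p : Euc d × Euc (n-d) | p.1 ∈ U ∧ p.2 = f p.1}) hΦzbG hmem
      have h2 : C (u, w) ∈ paraCone (Ψ '' {p : Euc d × Euc (n-d) | p.1 ∈ U ∧ p.2 = f p.1})
          (Ψ (Φ zb)) := paraCone_image hC hmem'
      rw [hΨG, hΨΦ zb hzW] at h2
      refine ⟨C (u, w), paraCone_mono inter_subset_left zb h2, ?_⟩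
      rw [hBC]
    refine ⟨S, hS, ?_⟩
    let ψ : S →ₗ[ℝ] Euc d :=
      { toFun := fun v => (B (v : Euc n)).1
        map_add' := fun v w => by simp
        map_smul' := fun r v => by simp }
    have hinj : Function.Injective ψ := by
      rw [injective_iff_map_eq_zero]
      intro v hv0
      have hvmem : (v : Euc n) ∈ paraCone Ω zb := hS ▸ v.2
      have h1 := hP1 _ hvmem
      have h2 : (B (v : Euc n)).1 = 0 := hv0
      rw [h2, norm_zero, mul_zero] at h1
      have h3 : B (v : Euc n) = 0 :=
        Prod.ext_iff.mpr ⟨h2, norm_le_zero_iff.mp h1⟩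
      have h4 := hCB (v : Euc n)
      rw [h3, map_zero] at h4
      exact Subtype.ext h4.symm
    have hsurj : Function.Surjective ψ := by
      intro u
      obtain ⟨v, hv, h1⟩ := hP3 u
      exact ⟨⟨v, by rw [← hS] at hv; exact hv⟩, h1⟩
    have e := LinearEquiv.ofBijective ψ ⟨hinj, hsurj⟩
    rw [e.finrank_eq]
    exact finrank_euclideanSpace_fin
  · -- limiting normal cone
    rintro ⟨S, hS⟩
    set inlL := ContinuousLinearMap.inl ℝ (Euc d) (Euc (n-d)) with hinlL
    set inrL := ContinuousLinearMap.inr ℝ (Euc d) (Euc (n-d)) with hinrL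
    set aL : Euc n →L[ℝ] Euc d := ContinuousLinearMap.adjoint (C.comp inlL) with haL
    set bL : Euc n →L[ℝ] Euc (n-d) := ContinuousLinearMap.adjoint (C.comp inrL) with hbL
    have ha_in : ∀ (v : Euc n) (u : Euc d), ⟪aL v, u⟫ = ⟪v, C (u, 0)⟫ := by
      intro v u
      rw [haL, ContinuousLinearMap.adjoint_inner_left]
      rfl
    have hb_in : ∀ (v : Euc n) (w : Euc (n-d)), ⟪bL v, w⟫ = ⟪v, C (0, w)⟫ := by
      intro v w
      rw [hbL, ContinuousLinearMap.adjoint_inner_left]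
      rfl
    have hsplit : ∀ (v : Euc n) (p : Euc d × Euc (n-d)),
        ⟪v, C p⟫ = ⟪aL v, p.1⟫ + ⟪bL v, p.2⟫ := by
      intro v p
      rw [ha_in, hb_in, ← inner_add_right, ← map_add]
      congr 2
      simp
    have hfderivΨ_cont : ContinuousOn (fderiv ℝ Ψ) (Φ '' W) :=
      hΨc.continuousOn_fderiv_of_isOpen hΦWo le_rfl
    have hΦcont : ContinuousAt Φ zb := hΦca.continuousAt
    -- upper estimate for limiting normals
    have hN1 : ∀ v ∈ limNormal Ω zb, ∀ u : Euc d,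
        ∃ w : Euc (n-d), ‖w‖ ≤ K * ‖u‖ ∧ ⟪v, C (u, w)⟫ ≤ 0 := by
      rintro v ⟨zk, vk, hm, hzk, hreg, hvk⟩ u
      obtain ⟨N, hN⟩ := eventually_atTop.mp (hzk.eventually (hWo.mem_nhds hzW))
      set zk' : ℕ → Euc n := fun k => zk (k + N) with hzk'def
      have hm' : ∀ k, zk' k ∈ Ω ∩ W := fun k => ⟨hm _, hN _ (by omega)⟩
      have hzkc : Tendsto zk' atTop (𝓝 zb) := tendsto_shift N hzk
      have hGk : ∀ k, (Φ (zk' k)).1 ∈ U ∧ (Φ (zk' k)).2 = f (Φ (zk' k)).1 := by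
        intro k
        have h1 : Φ (zk' k) ∈ Φ '' (Ω ∩ W) := mem_image_of_mem _ (hm' k)
        rwa [hgraph] at h1
      choose wk hwk1 hwk2 using fun k => graph_tan_lower hUo hf (hGk k).1 u
      have hpush : ∀ k, (fderiv ℝ Ψ (Φ (zk' k))) (u, wk k) ∈ tanCone Ω (zk' k) := by
        intro k
        have hpt : (((Φ (zk' k)).1 : Euc d), f (Φ (zk' k)).1) = Φ (zk' k) :=
          Prod.ext_iff.mpr ⟨rfl, (hGk k).2.symm⟩
        have h1 : ((u, wk k) : Euc d × Euc (n-d)) ∈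
            tanCone {p : Euc d × Euc (n-d) | p.1 ∈ U ∧ p.2 = f p.1} (Φ (zk' k)) := by
          rw [← hpt]; exact hwk2 k
        have hd : HasFDerivAt Ψ (fderiv ℝ Ψ (Φ (zk' k))) (Φ (zk' k)) :=
          ((hΨc.contDiffAt (hΦWo.mem_nhds
            (mem_image_of_mem _ (hm' k).2))).differentiableAt one_ne_zero).hasFDerivAt
        have h2 := tanCone_image hd h1
        rw [hΨG, hΨΦ _ (hm' k).2] at h2
        exact tanCone_mono inter_subset_left _ h2
      have hle : ∀ k, ⟪vk (k + N), (fderiv ℝ Ψ (Φ (zk' k))) (u, wk k)⟫ ≤ 0 :=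
        fun k => hreg (k + N) _ (hpush k)
      obtain ⟨w, hwcl, φ, hφ, hwconv⟩ := tendsto_subseq_of_bounded
        (isBounded_closedBall (x := (0 : Euc (n-d))) (r := K * ‖u‖))
        (fun k => mem_closedBall_zero_iff.mpr (hwk1 k))
      rw [closure_closedBall] at hwcl
      refine ⟨w, mem_closedBall_zero_iff.mp hwcl, ?_⟩
      have hΦzk : Tendsto (fun k => Φ (zk' k)) atTop (𝓝 (Φ zb)) := hΦcont.tendsto.comp hzkc
      have hCk : Tendsto (fun k => fderiv ℝ Ψ (Φ (zk' k))) atTop (𝓝 C) :=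
        ((hfderivΨ_cont.continuousAt (hΦWo.mem_nhds hΦzb_mem)).tendsto).comp hΦzk
      have happ : Tendsto (fun j => (fderiv ℝ Ψ (Φ (zk' (φ j)))) (u, wk (φ j))) atTop
          (𝓝 (C (u, w))) :=
        tendsto_clm_apply' (hCk.comp hφ.tendsto_atTop)
          (tendsto_const_nhds.prodMk_nhds hwconv)
      have hvφ : Tendsto (fun j => vk (φ j + N)) atTop (𝓝 v) :=
        (tendsto_shift N hvk).comp hφ.tendsto_atTop
      have hinner : Tendsto
          (fun j => ⟪vk (φ j + N), (fderiv ℝ Ψ (Φ (zk' (φ j)))) (u, wk (φ j))⟫)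
          atTop (𝓝 ⟪v, C (u, w)⟫) := hvφ.inner happ
      exact le_of_tendsto hinner (Eventually.of_forall fun j => hle (φ j))
    have hN2 : ∀ v ∈ limNormal Ω zb, ‖aL v‖ ≤ K * ‖bL v‖ := by
      intro v hv
      obtain ⟨w, hw1, hw2⟩ := hN1 v hv (aL v)
      rw [hsplit] at hw2
      have h1 : ‖aL v‖ ^ 2 ≤ -⟪bL v, w⟫ := by
        rw [← real_inner_self_eq_norm_sq]
        simp only at hw2
        linarith
      have h2 : -⟪bL v, w⟫ ≤ ‖bL v‖ * ‖w‖ := by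
        have h3 := abs_real_inner_le_norm (bL v) w
        have h4 := neg_abs_le ⟪bL v, w⟫
        linarith
      rcases eq_or_lt_of_le (norm_nonneg (aL v)) with h0 | h0
      · rw [← h0]; positivity
      · have h5 : ‖aL v‖ ^ 2 ≤ (K * ‖bL v‖) * ‖aL v‖ := by
          have h6 : ‖bL v‖ * ‖w‖ ≤ ‖bL v‖ * (K * ‖aL v‖) :=
            mul_le_mul_of_nonneg_left hw1 (norm_nonneg _)
          calc ‖aL v‖ ^ 2 ≤ -⟪bL v, w⟫ := h1
            _ ≤ ‖bL v‖ * ‖w‖ := h2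
            _ ≤ ‖bL v‖ * (K * ‖aL v‖) := h6
            _ = (K * ‖bL v‖) * ‖aL v‖ := by ring
        rw [sq] at h5
        exact le_of_mul_le_mul_right h5 h0
    -- surjectivity of bL on the limiting normal cone
    have hN4 : ∀ y : Euc (n-d), ∃ v ∈ limNormal Ω zb, bL v = y := by
      intro y
      have hrad : ∀ m : ℕ, ∃ x : Euc d, x ∈ ball (Φ zb).1 (1/(m+1)) ∧ x ∈ U ∧
          DifferentiableWithinAt ℝ f U x := by
        intro m
        have hae : ∀ᵐ x ∂(MeasureTheory.volume : MeasureTheory.Measure (Euc d)),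
            x ∈ U → DifferentiableWithinAt ℝ f U x :=
          hf.ae_differentiableWithinAt_of_mem
        by_contra hcon
        push_neg at hcon
        have hsub : (ball (Φ zb).1 (1/(m+1)) ∩ U)
            ⊆ {x | ¬ (x ∈ U → DifferentiableWithinAt ℝ f U x)} := by
          intro x hx hdif
          exact hcon x hx.1 hx.2 (hdif hx.2)
        have hpos : 0 < MeasureTheory.volume (ball (Φ zb).1 (1/(m+1)) ∩ U) :=
          (isOpen_ball.inter hUo).measure_pos MeasureTheory.volume
            ⟨(Φ zb).1, mem_ball_self (by positivity), hΦzbG.1⟩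
        have h0 : MeasureTheory.volume {x | ¬ (x ∈ U → DifferentiableWithinAt ℝ f U x)} = 0 :=
          MeasureTheory.ae_iff.mp hae
        exact absurd (le_trans (MeasureTheory.measure_mono hsub) h0.le) (by simpa using hpos.ne')
      choose xk hxk1 hxk2 hxk3 using hrad
      have hxkc : Tendsto xk atTop (𝓝 (Φ zb).1) := by
        rw [tendsto_iff_dist_tendsto_zero]
        refine squeeze_zero (fun m => dist_nonneg) (fun m => (mem_ball.mp (hxk1 m)).le) ?_
        exact tendsto_one_div_add_atTop_nhds_zero_nat
      set Ak : ℕ → (Euc d →L[ℝ] Euc (n-d)) := fun m => fderiv ℝ f (xk m) with hAkdef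
      have hAd : ∀ m, HasFDerivAt f (Ak m) (xk m) := fun m =>
        ((hxk3 m).differentiableAt (hUo.mem_nhds (hxk2 m))).hasFDerivAt
      have hAb : ∀ m, ‖Ak m‖ ≤ K := fun m =>
        (hAd m).le_of_lipschitzOn (hUo.mem_nhds (hxk2 m)) hf
      obtain ⟨A, hAcl, φ, hφ, hAconv⟩ := tendsto_subseq_of_bounded
        (isBounded_closedBall (x := (0 : Euc d →L[ℝ] Euc (n-d))) (r := K))
        (fun m => mem_closedBall_zero_iff.mpr (hAb m))
      have hpkG : ∀ m, ((xk (φ m), f (xk (φ m))) : Euc d × Euc (n-d)) ∈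
          {p : Euc d × Euc (n-d) | p.1 ∈ U ∧ p.2 = f p.1} := fun m => ⟨hxk2 _, rfl⟩
      have hzkdat : ∀ m, Ψ (xk (φ m), f (xk (φ m))) ∈ Ω ∩ W ∧
          Φ (Ψ (xk (φ m), f (xk (φ m)))) = (xk (φ m), f (xk (φ m))) := by
        intro m
        have h1 : ((xk (φ m), f (xk (φ m))) : Euc d × Euc (n-d)) ∈ Φ '' (Ω ∩ W) := by
          rw [hgraph]; exact hpkG m
        obtain ⟨ω, hω, hωe⟩ := h1
        have h2 : Ψ (xk (φ m), f (xk (φ m))) = ω := by rw [← hωe, hΨΦ _ hω.2]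
        rw [h2, hωe]
        exact ⟨hω, rfl⟩
      set zk : ℕ → Euc n := fun m => Ψ (xk (φ m), f (xk (φ m))) with hzkdef
      have hzkΩW : ∀ m, zk m ∈ Ω ∩ W := fun m => (hzkdat m).1
      have hΦzk : ∀ m, Φ (zk m) = (xk (φ m), f (xk (φ m))) := fun m => (hzkdat m).2
      have hxkφ : Tendsto (fun m => xk (φ m)) atTop (𝓝 (Φ zb).1) := hxkc.comp hφ.tendsto_atTop
      have hfxk : Tendsto (fun m => f (xk (φ m))) atTop (𝓝 ((Φ zb).2)) := by
        rw [hΦzbG.2, tendsto_iff_dist_tendsto_zero]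
        have hd : Tendsto (fun m => (K:ℝ) * dist (xk (φ m)) (Φ zb).1) atTop (𝓝 0) := by
          have h1 := (tendsto_iff_dist_tendsto_zero.mp hxkφ).const_mul (K:ℝ)
          rwa [mul_zero] at h1
        exact squeeze_zero (fun m => dist_nonneg)
          (fun m => hf.dist_le_mul _ (hxk2 _) _ hΦzbG.1) hd
      have hpkc : Tendsto (fun m => ((xk (φ m), f (xk (φ m))) : Euc d × Euc (n-d)))
          atTop (𝓝 (Φ zb)) := by
        have h1 : Tendsto (fun m => ((xk (φ m), f (xk (φ m))) : Euc d × Euc (n-d)))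
            atTop (𝓝 ((Φ zb).1, (Φ zb).2)) := hxkφ.prodMk_nhds hfxk
        simpa using h1
      have hzkc : Tendsto zk atTop (𝓝 zb) := by
        have h1 := hΨca.continuousAt.tendsto.comp hpkc
        rwa [hΨΦ zb hzW] at h1
      set Bk : ℕ → (Euc n →L[ℝ] Euc d × Euc (n-d)) := fun m => fderiv ℝ Φ (zk m) with hBkdef
      have hBk : ∀ m, HasFDerivAt Φ (Bk m) (zk m) := fun m =>
        ((hΦc.contDiffAt (hWo.mem_nhds (hzkΩW m).2)).differentiableAt one_ne_zero).hasFDerivAt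
      have hBkc : Tendsto Bk atTop (𝓝 B) := by
        have h1 : ContinuousOn (fderiv ℝ Φ) W := hΦc.continuousOn_fderiv_of_isOpen hWo le_rfl
        exact ((h1.continuousAt (hWo.mem_nhds hzW)).tendsto).comp hzkc
      set fstL := ContinuousLinearMap.fst ℝ (Euc d) (Euc (n-d)) with hfstL
      set sndL := ContinuousLinearMap.snd ℝ (Euc d) (Euc (n-d)) with hsndL
      set T : (Euc n →L[ℝ] Euc d × Euc (n-d)) → (Euc d × Euc (n-d)) → Euc n := fun M q =>
        (ContinuousLinearMap.adjoint (fstL.comp M)) q.1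
          + (ContinuousLinearMap.adjoint (sndL.comp M)) q.2 with hTdef
      have hT : ∀ M q (z : Euc n), ⟪T M q, z⟫ = ⟪q.1, (M z).1⟫ + ⟪q.2, (M z).2⟫ := by
        intro M q z
        rw [hTdef]
        simp only
        rw [inner_add_left, ContinuousLinearMap.adjoint_inner_left,
          ContinuousLinearMap.adjoint_inner_left]
        rfl
      set qk : ℕ → Euc d × Euc (n-d) := fun m =>
        (-(ContinuousLinearMap.adjoint (Ak (φ m))) y, y) with hqkdef
      set vk : ℕ → Euc n := fun m => T (Bk m) (qk m) with hvkdef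
      have hvreg : ∀ m, vk m ∈ regNormal Ω (zk m) := by
        intro m t ht
        have h1 : t ∈ tanCone (Ω ∩ W) (zk m) := by
          rw [← tanCone_inter_nhds (hWo.mem_nhds (hzkΩW m).2)]; exact ht
        have h2 : Bk m t ∈ tanCone (Φ '' (Ω ∩ W)) (Φ (zk m)) := tanCone_image (hBk m) h1
        rw [hgraph, hΦzk m] at h2
        have h3 : (Bk m t).2 = Ak (φ m) ((Bk m t).1) :=
          graph_tan_upper (U := U) (hAd (φ m)) h2
        have e1 : (qk m).1 = -(ContinuousLinearMap.adjoint (Ak (φ m))) y := rfl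
        have e2 : (qk m).2 = y := rfl
        show ⟪T (Bk m) (qk m), t⟫ ≤ 0
        rw [hT, h3, e1, e2, inner_neg_left, ContinuousLinearMap.adjoint_inner_left]
        simp
      set q8 : Euc d × Euc (n-d) := (-(ContinuousLinearMap.adjoint A) y, y) with hq8def
      set v : Euc n := T B q8 with hvdef
      have hadjc : Continuous fun (M : Euc d →L[ℝ] Euc (n-d)) =>
          ContinuousLinearMap.adjoint M :=
        (ContinuousLinearMap.adjoint (𝕜 := ℝ) (E := Euc d) (F := Euc (n-d))).continuous
      have hqkc : Tendsto qk atTop (𝓝 q8) := by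
        refine Tendsto.prodMk_nhds ?_ tendsto_const_nhds
        have h1 : Tendsto (fun m => ContinuousLinearMap.adjoint (Ak (φ m))) atTop
            (𝓝 (ContinuousLinearMap.adjoint A)) := (hadjc.tendsto A).comp hAconv
        exact (tendsto_clm_apply' h1 tendsto_const_nhds).neg
      have hvkc : Tendsto vk atTop (𝓝 v) := by
        have hcomp1 : Continuous fun (M : Euc n →L[ℝ] Euc d × Euc (n-d)) => fstL.comp M :=
          (ContinuousLinearMap.compL ℝ (Euc n) (Euc d × Euc (n-d)) (Euc d) fstL).continuous
        have hcomp2 : Continuous fun (M : Euc n →L[ℝ] Euc d × Euc (n-d)) => sndL.comp M :=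
          (ContinuousLinearMap.compL ℝ (Euc n) (Euc d × Euc (n-d)) (Euc (n-d)) sndL).continuous
        have hadjc1 : Continuous fun (M : Euc n →L[ℝ] Euc d) =>
            ContinuousLinearMap.adjoint M :=
          (ContinuousLinearMap.adjoint (𝕜 := ℝ) (E := Euc n) (F := Euc d)).continuous
        have hadjc2 : Continuous fun (M : Euc n →L[ℝ] Euc (n-d)) =>
            ContinuousLinearMap.adjoint M :=
          (ContinuousLinearMap.adjoint (𝕜 := ℝ) (E := Euc n) (F := Euc (n-d))).continuous
        have h1 : Tendsto (fun m => (ContinuousLinearMap.adjoint (fstL.comp (Bk m))) ((qk m).1))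
            atTop (𝓝 ((ContinuousLinearMap.adjoint (fstL.comp B)) q8.1)) :=
          tendsto_clm_apply' (((hadjc1.comp hcomp1).tendsto B).comp hBkc)
            ((continuous_fst.tendsto _).comp hqkc)
        have h2 : Tendsto (fun m => (ContinuousLinearMap.adjoint (sndL.comp (Bk m))) ((qk m).2))
            atTop (𝓝 ((ContinuousLinearMap.adjoint (sndL.comp B)) q8.2)) :=
          tendsto_clm_apply' (((hadjc2.comp hcomp2).tendsto B).comp hBkc)
            ((continuous_snd.tendsto _).comp hqkc)
        exact h1.add h2
      refine ⟨v, ⟨zk, vk, fun m => (hzkΩW m).1, hzkc, hvreg, hvkc⟩, ?_⟩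
      refine ext_inner_right ℝ fun w => ?_
      rw [hb_in]
      show ⟪T B q8, C (0, w)⟫ = ⟪y, w⟫
      rw [hT, hBC]
      have e1 : q8.1 = -(ContinuousLinearMap.adjoint A) y := rfl
      have e2 : q8.2 = y := rfl
      rw [e1, e2]
      simp
    -- assemble
    refine ⟨S, hS, ?_⟩
    let ψ : S →ₗ[ℝ] Euc (n-d) :=
      { toFun := fun v => bL (v : Euc n)
        map_add' := fun v w => by simp
        map_smul' := fun r v => by simp }
    have hinj : Function.Injective ψ := by
      rw [injective_iff_map_eq_zero]
      intro v hv0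
      have hvmem : (v : Euc n) ∈ limNormal Ω zb := hS ▸ v.2
      have h1 := hN2 _ hvmem
      have hb0 : bL (v : Euc n) = 0 := hv0
      rw [hb0, norm_zero, mul_zero] at h1
      have h2 : aL (v : Euc n) = 0 := norm_le_zero_iff.mp h1
      have h3 : ⟪(v : Euc n), (v : Euc n)⟫ = 0 := by
        have h4 := hsplit (v : Euc n) (B (v : Euc n))
        rw [hCB] at h4
        rw [h4, h2, hb0]
        simp
      exact Subtype.ext (inner_self_eq_zero.mp h3)
    have hsurj : Function.Surjective ψ := by
      intro y
      obtain ⟨v, hv, h1⟩ := hN4 y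
      exact ⟨⟨v, by rw [← hS] at hv; exact hv⟩, h1⟩
    have e := LinearEquiv.ofBijective ψ ⟨hinj, hsurj⟩
    rw [e.finrank_eq]
    exact finrank_euclideanSpace_fin
end
end

section
/- Assume that the set Ω ⊆ ℝⁿ is locally closed and strictly smooth at z̄ ∈ Ω. Then Ω is semismooth* at z̄. -/
open Filter Topology Metric Set
open scoped RealInnerProductSpace NNReal ENNReal

noncomputable section

section Aux

/-- Scaling a regular normal by a nonnegative constant keeps it a regular normal. -/
lemma smul_mem_regNormal {n : ℕ} {Ω : Set (Euc n)} {z v : Euc n}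
    (hv : v ∈ regNormal Ω z) {c : ℝ} (hc : 0 ≤ c) : c • v ∈ regNormal Ω z := by
  intro w hw
  rw [real_inner_smul_left]
  exact mul_nonpos_iff.mpr (Or.inl ⟨hc, hv w hw⟩)

/-- A vector polar to the tangent cone is a Fréchet normal (finite dimensions). -/
lemma regNormal_frechet {n : ℕ} {Ω : Set (Euc n)} {z v : Euc n}
    (hv : v ∈ regNormal Ω z) {ε : ℝ} (hε : 0 < ε) :
    ∃ δ > 0, ∀ z' ∈ Ω, ‖z' - z‖ < δ → ⟪v, z' - z⟫ ≤ ε * ‖z' - z‖ := by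
  by_contra h
  push_neg at h
  choose f hfΩ hfδ hfι using fun k : ℕ => h (1 / (k + 1)) (by positivity)
  have hfz : ∀ k, f k ≠ z := by
    intro k hk
    have := hfι k
    rw [hk, sub_self] at this
    simp at this
  set s : ℕ → ℝ := fun k => ‖f k - z‖ with hs
  have hspos : ∀ k, 0 < s k := fun k => by
    simpa [hs] using sub_ne_zero_of_ne (hfz k)
  set d : ℕ → Euc n := fun k => (s k)⁻¹ • (f k - z) with hd
  have hdsph : ∀ k, d k ∈ Metric.sphere (0 : Euc n) 1 := by
    intro k
    rw [mem_sphere_zero_iff_norm, hd, norm_smul, norm_inv, norm_norm]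
    exact inv_mul_cancel₀ (hspos k).ne'
  obtain ⟨dl, hdl, φ, hφ, hcd⟩ :=
    (isCompact_sphere (0 : Euc n) 1).tendsto_subseq hdsph
  have hs0 : Tendsto s atTop (𝓝 0) := by
    apply squeeze_zero (fun k => (hspos k).le) (fun k => (hfδ k).le)
    exact tendsto_one_div_add_atTop_nhds_zero_nat
  have htan : dl ∈ tanCone Ω z := by
    refine ⟨s ∘ φ, d ∘ φ, fun k => hspos _, hs0.comp hφ.tendsto_atTop, hcd, fun k => ?_⟩
    show z + s (φ k) • d (φ k) ∈ Ω
    rw [hd, smul_inv_smul₀ (hspos (φ k)).ne']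
    simpa using hfΩ (φ k)
  have hle : ⟪v, dl⟫ ≤ 0 := hv dl htan
  have hlim : Tendsto (fun k => ⟪v, d (φ k)⟫) atTop (𝓝 ⟪v, dl⟫) :=
    Tendsto.inner tendsto_const_nhds hcd
  have hge : ∀ k, ε ≤ ⟪v, d (φ k)⟫ := by
    intro k
    have h1 := hfι (φ k)
    have h2 := hspos (φ k)
    rw [hd, real_inner_smul_right]
    calc ε = ε * s (φ k) * (s (φ k))⁻¹ := by field_simp
    _ ≤ ⟪v, f (φ k) - z⟫ * (s (φ k))⁻¹ := by
        apply mul_le_mul_of_nonneg_right h1.le (by positivity)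
    _ = (s (φ k))⁻¹ * ⟪v, f (φ k) - z⟫ := by ring
  linarith [ge_of_tendsto' hlim hge]

/-- Normalization is continuous at a nonzero point. -/
lemma tendsto_normalize {n : ℕ} {x : ℕ → Euc n} {y : Euc n} (hx : Tendsto x atTop (𝓝 y))
    (hy : y ≠ 0) : Tendsto (fun k => ‖x k‖⁻¹ • x k) atTop (𝓝 (‖y‖⁻¹ • y)) :=
  Tendsto.smul (hx.norm.inv₀ (norm_ne_zero_iff.mpr hy)) hx

end Aux

/-- Theorem 3.5(i): a locally closed set which is strictly smooth at a
point is semismooth* there. -/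
theorem stmt_11 {n : ℕ} (Ω : Set (Euc n)) (zb : Euc n) (hz : zb ∈ Ω)
    (hloc : LocallyClosedAt Ω zb) (hss : StrictlySmoothAt Ω zb) :
    SemismoothStarAt Ω zb := by
  by_contra hns
  unfold SemismoothStarAt at hns
  push_neg at hns
  obtain ⟨ε, hε, hcon⟩ := hns
  choose z hzΩ hzδ v hvN hvι using fun k : ℕ => hcon (1 / (k + 1)) (by positivity)
  have hzne : ∀ k, z k ≠ zb := by
    intro k hk
    have := hvι k
    rw [hk, sub_self] at this
    simp at this
  have hvne : ∀ k, v k ≠ 0 := by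
    intro k hk
    have := hvι k
    rw [hk] at this
    simp at this
  have htpos : ∀ k, (0:ℝ) < ‖z k - zb‖ := fun k => by
    simpa using sub_ne_zero_of_ne (hzne k)
  -- diagonalization: replace limiting normals by regular normals at nearby points
  have hdiag : ∀ k : ℕ, ∃ Z V : Euc n, Z ∈ Ω ∧ V ∈ regNormal Ω Z ∧ Z ≠ zb ∧ V ≠ 0 ∧
      ‖Z - zb‖ < 2 / (k + 1) ∧
      ‖‖V‖⁻¹ • V - ‖v k‖⁻¹ • v k‖ < ε / 8 ∧
      ‖‖Z - zb‖⁻¹ • (Z - zb) - ‖z k - zb‖⁻¹ • (z k - zb)‖ < ε / 8 := by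
    intro k
    obtain ⟨a, b, haΩ, haz, hbN, hbv⟩ := hvN k
    have hr : (0:ℝ) < min (1 / (k + 1) : ℝ) ‖z k - zb‖ := lt_min (by positivity) (htpos k)
    have e1 : ∀ᶠ j in atTop, a j ∈ Metric.ball (z k) (min (1 / (k + 1) : ℝ) ‖z k - zb‖) :=
      haz.eventually_mem (Metric.ball_mem_nhds _ hr)
    have e2 : ∀ᶠ j in atTop, ‖b j‖⁻¹ • b j ∈ Metric.ball (‖v k‖⁻¹ • v k) (ε / 8) :=
      (tendsto_normalize hbv (hvne k)).eventually_mem (Metric.ball_mem_nhds _ (by positivity))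
    have e3 : ∀ᶠ j in atTop, b j ≠ 0 :=
      hbv.eventually_mem (isOpen_compl_singleton.mem_nhds (hvne k))
    have haz' : Tendsto (fun j => a j - zb) atTop (𝓝 (z k - zb)) :=
      haz.sub tendsto_const_nhds
    have e4 : ∀ᶠ j in atTop, ‖a j - zb‖⁻¹ • (a j - zb) ∈
        Metric.ball (‖z k - zb‖⁻¹ • (z k - zb)) (ε / 8) :=
      (tendsto_normalize haz' (sub_ne_zero_of_ne (hzne k))).eventually_mem
        (Metric.ball_mem_nhds _ (by positivity))
    obtain ⟨j, ⟨⟨h1, h2⟩, h3⟩, h4⟩ := (((e1.and e2).and e3).and e4).exists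
    rw [Metric.mem_ball, dist_eq_norm] at h1 h2 h4
    refine ⟨a j, b j, haΩ j, hbN j, ?_, h3, ?_, h2, h4⟩
    · intro hj
      rw [hj] at h1
      have := lt_of_lt_of_le h1 (min_le_right _ _)
      rw [norm_sub_rev] at this
      exact lt_irrefl _ this
    · have t1 : ‖a j - z k‖ < 1 / (k + 1) := lt_of_lt_of_le h1 (min_le_left _ _)
      have t2 := hzδ k
      calc ‖a j - zb‖ ≤ ‖a j - z k‖ + ‖z k - zb‖ := norm_sub_le_norm_sub_add_norm_sub _ _ _
        _ < 1 / (k + 1) + 1 / (k + 1) := by linarith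
        _ = 2 / (k + 1) := by ring
  choose Z V hΩ hN hZne hVne hZδ hVε hWε using hdiag
  have hTpos : ∀ k, (0:ℝ) < ‖Z k - zb‖ := fun k => by
    simpa using sub_ne_zero_of_ne (hZne k)
  set u : ℕ → Euc n := fun k => ‖V k‖⁻¹ • V k with hu
  set w : ℕ → Euc n := fun k => ‖Z k - zb‖⁻¹ • (Z k - zb) with hw
  have hnormalize : ∀ x : Euc n, x ≠ 0 → ‖‖x‖⁻¹ • x‖ = 1 := by
    intro x hx
    rw [norm_smul, norm_inv, norm_norm, inv_mul_cancel₀ (norm_ne_zero_iff.mpr hx)]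
  have hun : ∀ k, ‖u k‖ = 1 := fun k => hnormalize _ (hVne k)
  have hwn : ∀ k, ‖w k‖ = 1 := fun k => hnormalize _ (sub_ne_zero_of_ne (hZne k))
  -- the inner product estimate at the approximating points
  have hbig : ∀ k, ε / 2 < |⟪u k, w k⟫| := by
    intro k
    set u0 : Euc n := ‖v k‖⁻¹ • v k with hu0
    set w0 : Euc n := ‖z k - zb‖⁻¹ • (z k - zb) with hw0
    have hu0n : ‖u0‖ = 1 := hnormalize _ (hvne k)
    have h0 : ε < |⟪u0, w0⟫| := by
      rw [hu0, hw0, real_inner_smul_left, real_inner_smul_right, abs_mul, abs_mul,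
        abs_inv, abs_inv, abs_norm, abs_norm]
      have hm := norm_pos_iff.mpr (hvne k)
      have ht := htpos k
      rw [show ‖v k‖⁻¹ * (‖z k - zb‖⁻¹ * |⟪v k, z k - zb⟫|)
          = |⟪v k, z k - zb⟫| / (‖v k‖ * ‖z k - zb‖) from by ring,
        lt_div_iff₀ (by positivity)]
      calc ε * (‖v k‖ * ‖z k - zb‖) = ε * ‖z k - zb‖ * ‖v k‖ := by ring
        _ < |⟪v k, z k - zb⟫| := hvι k
    have hdec : ⟪u k, w k⟫ - ⟪u0, w0⟫ = ⟪u k - u0, w k⟫ + ⟪u0, w k - w0⟫ := by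
      rw [inner_sub_left, inner_sub_right]; ring
    have hb1 : |⟪u k - u0, w k⟫| ≤ ε / 8 := by
      calc |⟪u k - u0, w k⟫| ≤ ‖u k - u0‖ * ‖w k‖ := abs_real_inner_le_norm _ _
        _ = ‖u k - u0‖ := by rw [hwn k, mul_one]
        _ ≤ ε / 8 := (hVε k).le
    have hb2 : |⟪u0, w k - w0⟫| ≤ ε / 8 := by
      calc |⟪u0, w k - w0⟫| ≤ ‖u0‖ * ‖w k - w0‖ := abs_real_inner_le_norm _ _
        _ = ‖w k - w0‖ := by rw [hu0n, one_mul]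
        _ ≤ ε / 8 := (hWε k).le
    have hb3 : |⟪u k, w k⟫ - ⟪u0, w0⟫| ≤ ε / 4 := by
      rw [hdec]
      calc |⟪u k - u0, w k⟫ + ⟪u0, w k - w0⟫| ≤ _ := abs_add_le _ _
        _ ≤ ε / 4 := by linarith
    have := abs_sub_abs_le_abs_sub ⟪u0, w0⟫ ⟪u k, w k⟫
    rw [abs_sub_comm] at this
    linarith
  -- convergence of the approximating points
  have hZ0 : Tendsto Z atTop (𝓝 zb) := by
    rw [tendsto_iff_dist_tendsto_zero]
    have h2lim : Tendsto (fun k : ℕ => (2 / (k + 1) : ℝ)) atTop (𝓝 0) := by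
      have : Tendsto (fun k : ℕ => 2 * (1 / (k + 1) : ℝ)) atTop (𝓝 (2 * 0)) :=
        tendsto_one_div_add_atTop_nhds_zero_nat.const_mul 2
      simpa [mul_one_div, div_eq_mul_inv] using this
    exact squeeze_zero (fun k => dist_nonneg)
      (fun k => by rw [dist_eq_norm]; exact (hZδ k).le) h2lim
  -- extract a convergent subsequence of the pairs (w k, u k)
  have hq : ∀ k, (w k, u k) ∈
      (Metric.sphere (0 : Euc n) 1) ×ˢ (Metric.sphere (0 : Euc n) 1) := by
    intro k
    exact ⟨mem_sphere_zero_iff_norm.mpr (hwn k), mem_sphere_zero_iff_norm.mpr (hun k)⟩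
  obtain ⟨⟨wl, ul⟩, -, φ, hφ, hql⟩ :=
    ((isCompact_sphere (0 : Euc n) 1).prod (isCompact_sphere (0 : Euc n) 1)).tendsto_subseq hq
  have hwl : Tendsto (fun k => w (φ k)) atTop (𝓝 wl) := (continuous_fst.tendsto _).comp hql
  have hul : Tendsto (fun k => u (φ k)) atTop (𝓝 ul) := (continuous_snd.tendsto _).comp hql
  have hεhalf : ε / 2 ≤ |⟪ul, wl⟫| :=
    ge_of_tendsto' ((hul.inner hwl).abs) (fun k => (hbig (φ k)).le)
  have hZφ : Tendsto (fun k => Z (φ k)) atTop (𝓝 zb) := hZ0.comp hφ.tendsto_atTop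
  have hT : Tendsto (fun k => ‖Z (φ k) - zb‖) atTop (𝓝 0) := by
    have := (hZφ.sub (tendsto_const_nhds (x := zb))).norm
    simpa using this
  have hkey_smul : ∀ k, ‖Z (φ k) - zb‖ • w (φ k) = Z (φ k) - zb := fun k =>
    smul_inv_smul₀ (hTpos (φ k)).ne' _
  -- both wl and -wl belong to the paratingent cone at zb
  have hpara1 : wl ∈ paraCone Ω zb := by
    refine ⟨fun _ => zb, fun k => ‖Z (φ k) - zb‖, fun k => w (φ k), fun _ => hz,
      tendsto_const_nhds, fun k => hTpos (φ k), hT, hwl, fun k => ?_⟩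
    rw [hkey_smul k, show zb + (Z (φ k) - zb) = Z (φ k) from by abel]
    exact hΩ (φ k)
  have hpara2 : -wl ∈ paraCone Ω zb := by
    refine ⟨fun k => Z (φ k), fun k => ‖Z (φ k) - zb‖, fun k => -(w (φ k)),
      fun k => hΩ (φ k), hZφ, fun k => hTpos (φ k), hT, hwl.neg, fun k => ?_⟩
    rw [smul_neg, hkey_smul k, show Z (φ k) + -(Z (φ k) - zb) = zb from by abel]
    exact hz
  unfold StrictlySmoothAt at hss
  have hcl1 : wl ∈ clarkeCone Ω zb := by rw [hss]; exact hpara1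
  have hcl2 : -wl ∈ clarkeCone Ω zb := by rw [hss]; exact hpara2
  -- key step: ul is polar to the Clarke cone
  have key : ∀ y ∈ clarkeCone Ω zb, ⟪ul, y⟫ ≤ 0 := by
    intro y hy
    have hureg : ∀ k, u (φ k) ∈ regNormal Ω (Z (φ k)) := fun k =>
      smul_mem_regNormal (hN (φ k)) (inv_nonneg.mpr (norm_nonneg (V (φ k))))
    choose δ hδpos hδprop using fun k : ℕ =>
      regNormal_frechet (hureg k) (show (0:ℝ) < 1 / (k + 1) by positivity)
    set s : ℕ → ℝ := fun k => min (1 / (k + 1)) (δ k / (‖y‖ + 2)) with hsdef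
    have hspos : ∀ k, 0 < s k := fun k => lt_min (by positivity) (div_pos (hδpos k) (by positivity))
    have hs0 : Tendsto s atTop (𝓝 0) :=
      squeeze_zero (fun k => (hspos k).le) (fun k => min_le_left _ _)
        tendsto_one_div_add_atTop_nhds_zero_nat
    obtain ⟨p, hp, hpΩ⟩ := hy (fun k => Z (φ k)) s (fun k => hΩ (φ k)) hZφ hspos hs0
    have hev : ∀ᶠ k : ℕ in atTop, ⟪u (φ k), p k⟫ ≤ (1 / (k + 1) : ℝ) * ‖p k‖ := by
      have hpb : ∀ᶠ k in atTop, ‖p k‖ < ‖y‖ + 1 :=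
        hp.norm.eventually (gt_mem_nhds (lt_add_one ‖y‖))
      filter_upwards [hpb] with k hk
      have h1 : Z (φ k) + s k • p k ∈ Ω := hpΩ k
      have hle' : s k * (‖y‖ + 2) ≤ δ k :=
        (le_div_iff₀ (by positivity)).mp (min_le_right _ _)
      have h2 : ‖(Z (φ k) + s k • p k) - Z (φ k)‖ < δ k := by
        rw [add_sub_cancel_left, norm_smul, Real.norm_eq_abs, abs_of_pos (hspos k)]
        nlinarith [mul_lt_mul_of_pos_left hk (hspos k), norm_nonneg (p k), hspos k]
      have h5 := hδprop k _ h1 h2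
      rw [add_sub_cancel_left, real_inner_smul_right, norm_smul, Real.norm_eq_abs,
        abs_of_pos (hspos k)] at h5
      rw [show (1 / (↑k + 1) : ℝ) * (s k * ‖p k‖)
          = s k * ((1 / (↑k + 1)) * ‖p k‖) from by ring] at h5
      exact le_of_mul_le_mul_left h5 (hspos k)
    have hL : Tendsto (fun k => ⟪u (φ k), p k⟫) atTop (𝓝 ⟪ul, y⟫) := hul.inner hp
    have hR : Tendsto (fun k : ℕ => (1 / (k + 1) : ℝ) * ‖p k‖) atTop (𝓝 0) := by
      have := tendsto_one_div_add_atTop_nhds_zero_nat.mul hp.norm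
      simpa using this
    exact le_of_tendsto_of_tendsto hL hR hev
  have h1 := key wl hcl1
  have h2 := key (-wl) hcl2
  rw [inner_neg_right] at h2
  have habs : |⟪ul, wl⟫| ≤ 0 := abs_le.mpr ⟨by linarith, h1⟩
  linarith
end
end

section
/- Assume that the mapping F: ℝⁿ ⇒ ℝᵐ has locally closed graph at (x̄,ȳ) ∈ gph F and is strictly proto-differentiable at x̄ for ȳ. Then F is semismooth* at (x̄,ȳ). -/
open Filter Topology Metric Set
open scoped RealInnerProductSpace NNReal ENNReal

noncomputable section

section AuxSS

variable {n m : ℕ}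

lemma inner2_smul_left' (v w : Euc n × Euc m) (c : ℝ) :
    inner2 (c • v) w = c * inner2 v w := by
  unfold inner2
  rw [Prod.smul_fst, Prod.smul_snd, real_inner_smul_left, real_inner_smul_left, mul_add]

lemma inner2_smul_right' (v w : Euc n × Euc m) (c : ℝ) :
    inner2 v (c • w) = c * inner2 v w := by
  unfold inner2
  rw [Prod.smul_fst, Prod.smul_snd, real_inner_smul_right, real_inner_smul_right, mul_add]

lemma inner2_neg_right' (v w : Euc n × Euc m) : inner2 v (-w) = - inner2 v w := by
  unfold inner2
  rw [Prod.fst_neg, Prod.snd_neg, inner_neg_right, inner_neg_right]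
  ring

lemma inner2_zero_right' (v : Euc n × Euc m) : inner2 v 0 = 0 := by
  simp [inner2]

lemma inner2_zero_left' (w : Euc n × Euc m) : inner2 0 w = 0 := by
  simp [inner2]

set_option maxHeartbeats 1000000 in
lemma continuous_inner2' :
    Continuous (fun p : (Euc n × Euc m) × (Euc n × Euc m) => inner2 p.1 p.2) := by
  unfold inner2
  exact (continuous_fst.fst.inner continuous_snd.fst).add
    (continuous_fst.snd.inner continuous_snd.snd)

set_option maxHeartbeats 1000000 in
lemma tendsto_inner2' {vk wk : ℕ → Euc n × Euc m} {v w : Euc n × Euc m}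
    (hv : Tendsto vk atTop (𝓝 v)) (hw : Tendsto wk atTop (𝓝 w)) :
    Tendsto (fun k => inner2 (vk k) (wk k)) atTop (𝓝 (inner2 v w)) := by
  have hv1 : Tendsto (fun k => (vk k).1) atTop (𝓝 v.1) := (continuous_fst.tendsto v).comp hv
  have hv2 : Tendsto (fun k => (vk k).2) atTop (𝓝 v.2) := (continuous_snd.tendsto v).comp hv
  have hw1 : Tendsto (fun k => (wk k).1) atTop (𝓝 w.1) := (continuous_fst.tendsto w).comp hw
  have hw2 : Tendsto (fun k => (wk k).2) atTop (𝓝 w.2) := (continuous_snd.tendsto w).comp hw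
  unfold inner2
  exact (hv1.inner hw1).add (hv2.inner hw2)

/-- one over k+1 tends to zero -/
lemma tendsto_one_div_succ :
    Tendsto (fun k : ℕ => 1 / ((k : ℝ) + 1)) atTop (𝓝 0) :=
  tendsto_one_div_add_atTop_nhds_zero_nat

/-- The polar of the tangent cone satisfies the Fréchet (regular) normal inequality. -/
lemma regNormal2_frechet {Ω : Set (Euc n × Euc m)} {z v : Euc n × Euc m}
    (hv : v ∈ regNormal2 Ω z) {ε : ℝ} (hε : 0 < ε) :
    ∃ δ > 0, ∀ z' ∈ Ω, ‖z' - z‖ < δ → inner2 v (z' - z) ≤ ε * ‖z' - z‖ := by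
  by_contra h
  push_neg at h
  choose z' hmem hlt hineq using fun k : ℕ => h (1 / ((k : ℝ) + 1)) (by positivity)
  have hne : ∀ k, z' k ≠ z := by
    intro k hk
    have h1 := hineq k
    rw [hk] at h1
    simp [inner2_zero_right'] at h1
  set t : ℕ → ℝ := fun k => ‖z' k - z‖ with ht
  have htpos : ∀ k, 0 < t k := fun k => norm_pos_iff.2 (sub_ne_zero.2 (hne k))
  set u : ℕ → Euc n × Euc m := fun k => (t k)⁻¹ • (z' k - z) with hu
  have hunorm : ∀ k, ‖u k‖ = 1 := by
    intro k
    rw [hu]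
    simp only [norm_smul, norm_inv, Real.norm_eq_abs, abs_of_pos (htpos k)]
    exact inv_mul_cancel₀ (htpos k).ne'
  obtain ⟨a, _, φ, hφ, hconv⟩ :=
    (isCompact_closedBall (0 : Euc n × Euc m) 1).tendsto_subseq
      (fun k => mem_closedBall_zero_iff.2 (le_of_eq (hunorm k)))
  have hTle : ∀ k, t (φ k) ≤ 1 / ((k : ℝ) + 1) := by
    intro k
    refine le_trans (hlt (φ k)).le ?_
    apply one_div_le_one_div_of_le (by positivity)
    have hk : (k : ℝ) ≤ (φ k : ℝ) := Nat.cast_le.2 hφ.le_apply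
    linarith
  have hT : Tendsto (fun k => t (φ k)) atTop (𝓝 0) :=
    squeeze_zero (fun k => (htpos _).le) hTle tendsto_one_div_succ
  have haT : a ∈ tanCone Ω z := by
    refine ⟨fun k => t (φ k), fun k => u (φ k), fun k => htpos _, hT, hconv, fun k => ?_⟩
    have : t (φ k) • u (φ k) = z' (φ k) - z := smul_inv_smul₀ (htpos (φ k)).ne' _
    rw [this, add_sub_cancel]
    exact hmem _
  have h1 : inner2 v a ≤ 0 := hv a haT
  have h2 : ε ≤ inner2 v a := by
    refine ge_of_tendsto (tendsto_inner2' tendsto_const_nhds hconv)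
      (Eventually.of_forall fun k => ?_)
    have hi := hineq (φ k)
    have hpos := htpos (φ k)
    have heq : inner2 v ((u ∘ φ) k) = (t (φ k))⁻¹ * inner2 v (z' (φ k) - z) :=
      inner2_smul_right' _ _ _
    rw [heq, show ε = (t (φ k))⁻¹ * (ε * t (φ k)) by field_simp]
    exact mul_le_mul_of_nonneg_left hi.le (by positivity)
  linarith

/-- Clarke tangent directions are polar to limits of regular normals at nearby points. -/
lemma clarke_polar {Ω : Set (Euc n × Euc m)} {zb u : Euc n × Euc m}
    (hu : u ∈ clarkeCone Ω zb) {ζ ν : ℕ → Euc n × Euc m} {v : Euc n × Euc m}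
    (hζΩ : ∀ k, ζ k ∈ Ω) (hζ : Tendsto ζ atTop (𝓝 zb))
    (hν : ∀ k, ν k ∈ regNormal2 Ω (ζ k)) (hνv : Tendsto ν atTop (𝓝 v)) :
    inner2 v u ≤ 0 := by
  have hδ : ∀ k : ℕ, ∃ δ > 0, ∀ z' ∈ Ω, ‖z' - ζ k‖ < δ →
      inner2 (ν k) (z' - ζ k) ≤ (1 / ((k : ℝ) + 1)) * ‖z' - ζ k‖ :=
    fun k => regNormal2_frechet (hν k) (by positivity)
  choose δ hδpos hδ using hδ
  have hden : (0 : ℝ) < 2 * (‖u‖ + 1) := by positivity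
  set t : ℕ → ℝ := fun k => min (1 / ((k : ℝ) + 1)) (δ k / (2 * (‖u‖ + 1))) with htdef
  have htpos : ∀ k, 0 < t k := fun k =>
    lt_min (by positivity) (div_pos (hδpos k) hden)
  have ht0 : Tendsto t atTop (𝓝 0) :=
    squeeze_zero (fun k => (htpos k).le) (fun k => min_le_left _ _) tendsto_one_div_succ
  obtain ⟨uk, huk, hukΩ⟩ := hu ζ t hζΩ hζ htpos ht0
  have hev : ∀ᶠ k in atTop, ‖uk k‖ ≤ ‖u‖ + 1 := by
    exact huk.norm.eventually (eventually_le_nhds (by linarith : ‖u‖ < ‖u‖ + 1))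
  have key : ∀ᶠ k in atTop, inner2 (ν k) (uk k) ≤ (1 / ((k : ℝ) + 1)) * (‖u‖ + 1) := by
    filter_upwards [hev] with k hk
    have hzd : ‖(ζ k + t k • uk k) - ζ k‖ < δ k := by
      rw [add_sub_cancel_left, norm_smul, Real.norm_eq_abs, abs_of_pos (htpos k)]
      have h1 : t k * ‖uk k‖ ≤ t k * (‖u‖ + 1) :=
        mul_le_mul_of_nonneg_left hk (htpos k).le
      have h2 : t k ≤ δ k / (2 * (‖u‖ + 1)) := min_le_right _ _
      have h3 : t k * (‖u‖ + 1) ≤ δ k / 2 := by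
        have h2' : t k * (2 * (‖u‖ + 1)) ≤ δ k := (le_div_iff₀ hden).mp h2
        nlinarith
      linarith [hδpos k]
    have hineq := hδ k _ (hukΩ k) hzd
    rw [add_sub_cancel_left, inner2_smul_right', norm_smul, Real.norm_eq_abs,
      abs_of_pos (htpos k)] at hineq
    have h4 : inner2 (ν k) (uk k) ≤ (1 / ((k : ℝ) + 1)) * ‖uk k‖ := by
      have h5 : t k * inner2 (ν k) (uk k) ≤ t k * ((1 / ((k : ℝ) + 1)) * ‖uk k‖) := by
        rw [mul_comm (t k)] at hineq ⊢
        nlinarith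
      exact le_of_mul_le_mul_left h5 (htpos k)
    refine h4.trans (mul_le_mul_of_nonneg_left hk (by positivity))
  have lim1 : Tendsto (fun k => inner2 (ν k) (uk k)) atTop (𝓝 (inner2 v u)) :=
    tendsto_inner2' hνv huk
  have lim2 : Tendsto (fun k : ℕ => (1 / ((k : ℝ) + 1)) * (‖u‖ + 1)) atTop (𝓝 0) := by
    simpa using tendsto_one_div_succ.mul_const (‖u‖ + 1)
  exact le_of_tendsto_of_tendsto lim1 lim2 key

end AuxSS

/-- Theorem 3.5(ii): a mapping with locally closed graph which is
strictly proto-differentiable at `(xb, yb)` is semismooth* there. -/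
theorem stmt_12 {n m : ℕ} (F : Euc n → Set (Euc m)) (xb : Euc n) (yb : Euc m)
    (hy : yb ∈ F xb) (hloc : LocallyClosedAt (gphOf F) (xb, yb))
    (hspd : StrictlySmoothAt (gphOf F) (xb, yb)) :
    SemismoothStar2At (gphOf F) (xb, yb) := by
  classical
  set Ω : Set (Euc n × Euc m) := gphOf F with hΩ
  set zb : Euc n × Euc m := (xb, yb) with hzb
  have hzbΩ : zb ∈ Ω := hy
  by_contra hss
  unfold SemismoothStar2At at hss
  push_neg at hss
  obtain ⟨ε, hε, hbad⟩ := hss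
  -- Step A: for each k, find a point with a *regular* normal violating the estimate
  have step : ∀ k : ℕ, ∃ z' v' : Euc n × Euc m, z' ∈ Ω ∧ ‖z' - zb‖ < 1 / ((k : ℝ) + 1) ∧
      v' ∈ regNormal2 Ω z' ∧ ε * ‖z' - zb‖ * ‖v'‖ < |inner2 v' (z' - zb)| := by
    intro k
    obtain ⟨z, hzΩ, hzδ, v, hvN, hvI⟩ := hbad (1 / ((k : ℝ) + 1)) (by positivity)
    obtain ⟨ζ, ν, hζΩ, hζz, hνreg, hνv⟩ := hvN
    have h1 : Tendsto (fun j => |inner2 (ν j) (ζ j - zb)|) atTop (𝓝 |inner2 v (z - zb)|) :=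
      (tendsto_inner2' hνv (hζz.sub tendsto_const_nhds)).abs
    have h2 : Tendsto (fun j => ε * ‖ζ j - zb‖ * ‖ν j‖) atTop
        (𝓝 (ε * ‖z - zb‖ * ‖v‖)) :=
      (tendsto_const_nhds.mul (hζz.sub tendsto_const_nhds).norm).mul hνv.norm
    have h3 : ∀ᶠ j in atTop, ε * ‖ζ j - zb‖ * ‖ν j‖ < |inner2 (ν j) (ζ j - zb)| :=
      h2.eventually_lt h1 hvI
    have h4 : ∀ᶠ j in atTop, ‖ζ j - zb‖ < 1 / ((k : ℝ) + 1) :=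
      (hζz.sub tendsto_const_nhds).norm.eventually (eventually_lt_nhds hzδ)
    obtain ⟨j, hj3, hj4⟩ := (h3.and h4).exists
    exact ⟨ζ j, ν j, hζΩ j, hj4, hνreg j, hj3⟩
  choose z' v' hz'Ω hz'δ hv'reg hv'I using step
  -- z' k ≠ zb and v' k ≠ 0
  have hz'ne : ∀ k, z' k ≠ zb := by
    intro k hk
    have h1 := hv'I k
    rw [hk] at h1
    simp [inner2_zero_right'] at h1
  have hv'ne : ∀ k, v' k ≠ 0 := by
    intro k hk
    have h1 := hv'I k
    rw [hk] at h1
    simp [inner2_zero_left'] at h1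
  -- normalize
  set vhat : ℕ → Euc n × Euc m := fun k => ‖v' k‖⁻¹ • v' k with hvhatdef
  have hvhatnorm : ∀ k, ‖vhat k‖ = 1 := fun k => norm_smul_inv_norm (hv'ne k)
  have hvhatreg : ∀ k, vhat k ∈ regNormal2 Ω (z' k) := by
    intro k w hw
    rw [hvhatdef]
    simp only
    rw [inner2_smul_left']
    exact mul_nonpos_of_nonneg_of_nonpos (by positivity) (hv'reg k w hw)
  have hvhatI : ∀ k, ε * ‖z' k - zb‖ < |inner2 (vhat k) (z' k - zb)| := by
    intro k
    have hvpos : (0 : ℝ) < ‖v' k‖ := norm_pos_iff.2 (hv'ne k)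
    have := mul_lt_mul_of_pos_left (hv'I k) (inv_pos.2 hvpos)
    rw [hvhatdef]
    simp only
    rw [inner2_smul_left', abs_mul, abs_of_pos (inv_pos.2 hvpos)]
    calc ε * ‖z' k - zb‖ = ‖v' k‖⁻¹ * (ε * ‖z' k - zb‖ * ‖v' k‖) := by
          field_simp
      _ < ‖v' k‖⁻¹ * |inner2 (v' k) (z' k - zb)| := this
  -- t and direction w
  set t : ℕ → ℝ := fun k => ‖z' k - zb‖ with htdef
  have htpos : ∀ k, 0 < t k := fun k => norm_pos_iff.2 (sub_ne_zero.2 (hz'ne k))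
  set w : ℕ → Euc n × Euc m := fun k => (t k)⁻¹ • (z' k - zb) with hwdef
  have hwnorm : ∀ k, ‖w k‖ = 1 := by
    intro k
    rw [hwdef]
    simp only [norm_smul, norm_inv, Real.norm_eq_abs, abs_of_pos (htpos k)]
    exact inv_mul_cancel₀ (htpos k).ne'
  have hsmul : ∀ k, t k • w k = z' k - zb := fun k => smul_inv_smul₀ (htpos k).ne' _
  -- compactness
  obtain ⟨a, _, φ, hφ, hconv⟩ :=
    (isCompact_closedBall (0 : (Euc n × Euc m) × (Euc n × Euc m)) 1).tendsto_subseq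
      (x := fun k => (w k, vhat k)) (fun k => by
        rw [mem_closedBall_zero_iff, Prod.norm_def, hwnorm k, hvhatnorm k]
        simp)
  set wl : Euc n × Euc m := a.1 with hwl
  set vl : Euc n × Euc m := a.2 with hvl
  have hwconv : Tendsto (fun k => w (φ k)) atTop (𝓝 wl) :=
    (continuous_fst.tendsto a).comp hconv
  have hvconv : Tendsto (fun k => vhat (φ k)) atTop (𝓝 vl) :=
    (continuous_snd.tendsto a).comp hconv
  have hTle : ∀ k, t (φ k) ≤ 1 / ((k : ℝ) + 1) := by
    intro k
    refine le_trans (hz'δ (φ k)).le ?_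
    apply one_div_le_one_div_of_le (by positivity)
    have hk : (k : ℝ) ≤ (φ k : ℝ) := Nat.cast_le.2 hφ.le_apply
    linarith
  have hT : Tendsto (fun k => t (φ k)) atTop (𝓝 0) :=
    squeeze_zero (fun k => (htpos _).le) hTle tendsto_one_div_succ
  have hz'conv : Tendsto (fun k => z' (φ k)) atTop (𝓝 zb) := by
    rw [tendsto_iff_norm_sub_tendsto_zero]
    exact hT
  -- wl and -wl are paratingent directions
  have hwl_para : wl ∈ paraCone Ω zb := by
    refine ⟨fun _ => zb, fun k => t (φ k), fun k => w (φ k), fun _ => hzbΩ,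
      tendsto_const_nhds, fun k => htpos _, hT, hwconv, fun k => ?_⟩
    rw [hsmul (φ k), add_sub_cancel]
    exact hz'Ω (φ k)
  have hnwl_para : -wl ∈ paraCone Ω zb := by
    refine ⟨fun k => z' (φ k), fun k => t (φ k), fun k => -(w (φ k)), fun k => hz'Ω (φ k),
      hz'conv, fun k => htpos _, hT, hwconv.neg, fun k => ?_⟩
    rw [smul_neg, hsmul (φ k)]
    have : z' (φ k) + -(z' (φ k) - zb) = zb := by abel
    rw [this]
    exact hzbΩ
  -- pass to the Clarke cone via strict smoothness
  have hclk : clarkeCone Ω zb = paraCone Ω zb := hspd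
  have hwl_cl : wl ∈ clarkeCone Ω zb := hclk ▸ hwl_para
  have hnwl_cl : -wl ∈ clarkeCone Ω zb := hclk ▸ hnwl_para
  -- polarity
  have hpol1 : inner2 vl wl ≤ 0 :=
    clarke_polar hwl_cl (fun k => hz'Ω (φ k)) hz'conv (fun k => hvhatreg (φ k)) hvconv
  have hpol2 : inner2 vl (-wl) ≤ 0 :=
    clarke_polar hnwl_cl (fun k => hz'Ω (φ k)) hz'conv (fun k => hvhatreg (φ k)) hvconv
  rw [inner2_neg_right'] at hpol2
  have hzero : inner2 vl wl = 0 := le_antisymm hpol1 (by linarith)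
  -- but |inner2 vl wl| ≥ ε
  have hlim : Tendsto (fun k => |inner2 (vhat (φ k)) (w (φ k))|) atTop
      (𝓝 |inner2 vl wl|) := (tendsto_inner2' hvconv hwconv).abs
  have hεle : ε ≤ |inner2 vl wl| := by
    refine ge_of_tendsto hlim (Eventually.of_forall fun k => ?_)
    have hi := hvhatI (φ k)
    have hpos := htpos (φ k)
    have heq : |inner2 (vhat (φ k)) (z' (φ k) - zb)| =
        t (φ k) * |inner2 (vhat (φ k)) (w (φ k))| := by
      rw [← hsmul (φ k), inner2_smul_right', abs_mul, abs_of_pos hpos]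
    rw [heq] at hi
    have : ε * t (φ k) < t (φ k) * |inner2 (vhat (φ k)) (w (φ k))| := by
      rw [htdef] at hi ⊢; linarith [hi]
    nlinarith
  rw [hzero] at hεle
  simp at hεle
  linarith
end
end
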